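/- arXiv:2109.05286 — 5 statements merged into one kernel-verified Lean document; each statement's English description precedes it below -/
import Mathlib

section
/- Osgood's lemma: if η : [0,T] → [0,∞) is continuous, a ≥ 0, L ≥ 0, η(t) ≤ a + L ∫₀ᵗ φ(η(s)) ds for all t ∈ [0,T] with φ(r) = r(1 - ln r) for 0 < r ≤ 1, and if 0 < a < 1 and η(t) < 1 on [0,T], then η(t) ≤ e^{1 - exp(-L t)} a^{exp(-L t)} for all t ∈ [0,T]. -/
theorem osgood_lemma (φ : ℝ → ℝ) (hφ0 : φ 0 = 0)
    (hφ : ∀ r : ℝ, 0 < r → r ≤ 1 → φ r = r * (1 - Real.log r))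
    (T : ℝ) (hT : 0 ≤ T) (η : ℝ → ℝ) (hcont : ContinuousOn η (Set.Icc 0 T))
    (hnonneg : ∀ t ∈ Set.Icc 0 T, 0 ≤ η t)
    (a L : ℝ) (ha0 : 0 < a) (ha1 : a < 1) (hL : 0 ≤ L)
    (hlt1 : ∀ t ∈ Set.Icc 0 T, η t < 1)
    (hineq : ∀ t ∈ Set.Icc 0 T, η t ≤ a + L * ∫ s in (0 : ℝ)..t, φ (η s)) :
    ∀ t ∈ Set.Icc 0 T,
      η t ≤ Real.exp (1 - Real.exp (-L * t)) * a ^ Real.exp (-L * t) := by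
  -- the "nice" version of φ
  set g : ℝ → ℝ := fun r => r * (1 - Real.log r) with hg_def
  have hg_cont : Continuous g := by
    have : g = fun r => r - r * Real.log r := by
      funext r; simp [hg_def]; ring
    rw [this]
    exact continuous_id.sub Real.continuous_mul_log
  -- g is monotone on [0,1]
  have hg_der : ∀ x : ℝ, 0 < x → HasDerivAt g (-Real.log x) x := by
    intro x hx
    have h1 : HasDerivAt (fun r : ℝ => r - r * Real.log r) (1 - (Real.log x + 1)) x :=
      (hasDerivAt_id x).sub (Real.hasDerivAt_mul_log hx.ne')
    have h2 : g = fun r : ℝ => r - r * Real.log r := by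
      funext r; simp only [hg_def]; ring
    rw [h2]
    convert h1 using 1
    ring
  have hg_mono' : MonotoneOn g (Set.Icc (0:ℝ) 1) := by
    apply monotoneOn_of_deriv_nonneg (convex_Icc 0 1) hg_cont.continuousOn
    · intro x hx
      rw [interior_Icc] at hx
      exact (hg_der x hx.1).differentiableAt.differentiableWithinAt
    · intro x hx
      rw [interior_Icc] at hx
      rw [(hg_der x hx.1).deriv]
      simpa using Real.log_nonpos hx.1.le hx.2.le
  have hg_mono : ∀ x y : ℝ, 0 ≤ x → x ≤ y → y ≤ 1 → g x ≤ g y := by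
    intro x y hx hxy hy1
    exact hg_mono' ⟨hx, hxy.trans hy1⟩ ⟨hx.trans hxy, hy1⟩ hxy
  -- clamp η to get a globally continuous function
  set η' : ℝ → ℝ := fun s => η (max 0 (min s T)) with hη'_def
  have hclamp : ∀ s : ℝ, max 0 (min s T) ∈ Set.Icc 0 T := by
    intro s
    constructor
    · exact le_max_left _ _
    · exact max_le hT (min_le_right _ _)
  have hη'_cont : Continuous η' := by
    apply hcont.comp_continuous
    · exact continuous_const.max (continuous_id.min continuous_const)
    · exact hclamp
  have hη'_eq : ∀ s ∈ Set.Icc 0 T, η' s = η s := by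
    intro s hs
    have : max 0 (min s T) = s := by
      rw [min_eq_left hs.2, max_eq_right hs.1]
    simp [hη'_def, this]
  set f : ℝ → ℝ := fun s => g (η' s) with hf_def
  have hf_cont : Continuous f := hg_cont.comp hη'_cont
  have hf_nonneg : ∀ s, 0 ≤ f s := by
    intro s
    have h0 : 0 ≤ η' s := hnonneg _ (hclamp s)
    have h1 : η' s < 1 := hlt1 _ (hclamp s)
    have hl : Real.log (η' s) ≤ 0 := Real.log_nonpos h0 h1.le
    simp only [hf_def, hg_def]
    nlinarith
  -- F, the primitive
  set F : ℝ → ℝ := fun t => a + L * ∫ s in (0 : ℝ)..t, f s with hF_def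
  have hF_deriv : ∀ t : ℝ, HasDerivAt F (L * f t) t := by
    intro t
    exact ((hf_cont.integral_hasStrictDerivAt 0 t).hasDerivAt.const_mul L).const_add a
  have hF_mono : Monotone F :=
    monotone_of_deriv_nonneg (fun t => (hF_deriv t).differentiableAt)
      (fun t => by rw [(hF_deriv t).deriv]; exact mul_nonneg hL (hf_nonneg t))
  have hF0 : F 0 = a := by simp [hF_def]
  have hFpos : ∀ t : ℝ, 0 ≤ t → 0 < F t := by
    intro t ht
    calc (0:ℝ) < a := ha0
    _ = F 0 := hF0.symm
    _ ≤ F t := hF_mono ht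
  -- η ≤ F on [0,T]
  have hηF : ∀ t ∈ Set.Icc 0 T, η t ≤ F t := by
    intro t ht
    have key : (∫ s in (0:ℝ)..t, φ (η s)) = ∫ s in (0:ℝ)..t, f s := by
      apply intervalIntegral.integral_congr
      intro s hs
      have hs' : s ∈ Set.Icc 0 T := by
        rw [Set.uIcc_of_le ht.1] at hs
        exact ⟨hs.1, hs.2.trans ht.2⟩
      have h0 : 0 ≤ η s := hnonneg s hs'
      have h1 : η s < 1 := hlt1 s hs'
      simp only [hf_def, hη'_eq s hs']
      rcases eq_or_lt_of_le h0 with h | h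
      · simp [hg_def, ← h, hφ0]
      · exact hφ _ h h1.le
    have := hineq t ht
    rw [key] at this
    exact this
  -- the exponent function
  set E : ℝ → ℝ := fun t => 1 + (Real.log a - 1) * Real.exp (-L * t) with hE_def
  have hRHS : ∀ t : ℝ, Real.exp (1 - Real.exp (-L * t)) * a ^ Real.exp (-L * t)
      = Real.exp (E t) := by
    intro t
    rw [Real.rpow_def_of_pos ha0, ← Real.exp_add]
    congr 1
    simp only [hE_def]
    ring
  have hla : Real.log a - 1 < 0 := by
    have := Real.log_neg ha0 ha1
    linarith
  have hE_mono : ∀ s t : ℝ, s ≤ t → E s ≤ E t := by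
    intro s t hst
    simp only [hE_def]
    have hexp : Real.exp (-L * t) ≤ Real.exp (-L * s) :=
      Real.exp_le_exp.2 (by nlinarith)
    nlinarith
  -- main estimate while F ≤ 1
  have main : ∀ t ∈ Set.Icc 0 T, F t ≤ 1 → F t ≤ Real.exp (E t) := by
    intro t ht hFt1
    set w : ℝ → ℝ := fun s => (Real.log (F s) - 1) * Real.exp (L * s) with hw_def
    have hw_deriv : ∀ s ∈ Set.Icc (0:ℝ) t, 0 ≤ s →
        HasDerivAt w ((L * f s / F s) * Real.exp (L * s)
          + (Real.log (F s) - 1) * (L * Real.exp (L * s))) s := by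
      intro s _ hs0
      have hFs : F s ≠ 0 := (hFpos s hs0).ne'
      have h1 : HasDerivAt (fun s => Real.log (F s) - 1) (L * f s / F s) s :=
        ((hF_deriv s).log hFs).sub_const 1
      have h2 : HasDerivAt (fun s => Real.exp (L * s)) (Real.exp (L * s) * L) s := by
        simpa using ((hasDerivAt_id s).const_mul L).exp
      have : HasDerivAt (fun s => (Real.log (F s) - 1) * Real.exp (L * s))
          (L * f s / F s * Real.exp (L * s) + (Real.log (F s) - 1) * (Real.exp (L * s) * L)) s :=
        h1.fun_mul h2
      convert this using 1
      ring
    have hw_anti : AntitoneOn w (Set.Icc 0 t) := by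
      apply antitoneOn_of_deriv_nonpos (convex_Icc 0 t)
      · apply ContinuousOn.mul
        · apply ContinuousOn.sub _ continuousOn_const
          apply ContinuousOn.log
          · exact (fun s hs => ((hF_deriv s).differentiableAt.continuousAt).continuousWithinAt)
          · exact fun s hs => (hFpos s hs.1).ne'
        · exact (Real.continuous_exp.comp (continuous_const.mul continuous_id)).continuousOn
      · intro s hs
        rw [interior_Icc] at hs
        exact ((hw_deriv s (Set.mem_Icc.2 ⟨hs.1.le, hs.2.le⟩) hs.1.le).differentiableAt).differentiableWithinAt
      · intro s hs
        rw [interior_Icc] at hs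
        have hs' : s ∈ Set.Icc (0:ℝ) t := ⟨hs.1.le, hs.2.le⟩
        rw [(hw_deriv s hs' hs.1.le).deriv]
        have hFs0 : 0 < F s := hFpos s hs.1.le
        have hFs1 : F s ≤ 1 := (hF_mono hs.2.le).trans hFt1
        have hsT : s ∈ Set.Icc 0 T := ⟨hs.1.le, hs.2.le.trans ht.2⟩
        have hηFs : η' s ≤ F s := by rw [hη'_eq s hsT]; exact hηF s hsT
        have hfg : f s ≤ g (F s) := hg_mono _ _ (hnonneg _ (hclamp s)) hηFs hFs1
        have hkey : L * f s / F s ≤ L * (1 - Real.log (F s)) := by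
          rw [div_le_iff₀ hFs0]
          calc L * f s ≤ L * g (F s) := by nlinarith
          _ = L * (1 - Real.log (F s)) * F s := by simp only [hg_def]; ring
        have hexp : 0 < Real.exp (L * s) := Real.exp_pos _
        nlinarith
    have hwt : w t ≤ w 0 :=
      hw_anti (Set.left_mem_Icc.2 ht.1) (Set.right_mem_Icc.2 ht.1) ht.1
    have hw0 : w 0 = Real.log a - 1 := by simp [hw_def, hF0]
    rw [hw0] at hwt
    have hexp : 0 < Real.exp (L * t) := Real.exp_pos _
    have hlog : Real.log (F t) ≤ E t := by
      simp only [hE_def]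
      have h1 : (Real.log (F t) - 1) ≤ (Real.log a - 1) * Real.exp (-L * t) := by
        have h2 : Real.exp (-L * t) = (Real.exp (L * t))⁻¹ := by
          rw [← Real.exp_neg]; ring_nf
        rw [h2]
        have h3 := mul_le_mul_of_nonneg_right hwt (inv_nonneg.2 hexp.le)
        rwa [mul_assoc, mul_inv_cancel₀ hexp.ne', mul_one] at h3
      linarith
    calc F t = Real.exp (Real.log (F t)) := (Real.exp_log (hFpos t ht.1)).symm
    _ ≤ Real.exp (E t) := Real.exp_le_exp.2 hlog
  -- conclusion
  intro t ht
  rw [hRHS t]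
  by_cases hFt : F t ≤ 1
  · exact (hηF t ht).trans (main t ht hFt)
  · push_neg at hFt
    -- IVT: some t* ≤ t with F t* = 1
    have hmem : (1:ℝ) ∈ Set.Icc (F 0) (F t) := ⟨by rw [hF0]; linarith, hFt.le⟩
    obtain ⟨t', ht', hFt'⟩ := intermediate_value_Icc ht.1
      (fun s _ => ((hF_deriv s).differentiableAt.continuousAt).continuousWithinAt) hmem
    have ht'T : t' ∈ Set.Icc 0 T := ⟨ht'.1, ht'.2.trans ht.2⟩
    have h1 : (1:ℝ) ≤ Real.exp (E t') := by
      rw [← hFt']; exact main t' ht'T hFt'.le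
    have h2 : Real.exp (E t') ≤ Real.exp (E t) := Real.exp_le_exp.2 (hE_mono _ _ ht'.2)
    exact (hlt1 t ht).le.trans (h1.trans h2)
end

section
/- Let u : ℝ² × ℝ → ℝ² be continuous, bounded, and Log-Lipschitz in space uniformly in time: |u(x,t) − u(y,t)| ≤ M φ(|x−y|) where φ(r) = r(1 − ln r) for 0 < r ≤ 1, φ(r) = 1 for r > 1. Then for every (s, x), the ODE dX/dt = u(X, t), X(s) = x has a unique solution defined on all of ℝ. -/
open scoped Topology

open Set intervalIntegral

namespace LLflow

variable {E : Type*} [NormedAddCommGroup E] [NormedSpace ℝ E] [CompleteSpace E]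

set_option linter.unusedSectionVars false
set_option linter.unusedVariables false

/-- monotonicity of `r ↦ r (1 - log r)` on `(0,1]`. -/
lemma psi_mono {r e : ℝ} (hr : 0 < r) (hre : r ≤ e) (he : e ≤ 1) :
    r * (1 - Real.log r) ≤ e * (1 - Real.log e) := by
  have he0 : 0 < e := lt_of_lt_of_le hr hre
  have h1 : Real.log (e / r) ≤ e / r - 1 := Real.log_le_sub_one_of_pos (by positivity)
  rw [Real.log_div (ne_of_gt he0) (ne_of_gt hr)] at h1
  have h2 : r * (Real.log e - Real.log r) ≤ r * (e / r - 1) := by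
    exact mul_le_mul_of_nonneg_left h1 hr.le
  have h3 : r * (e / r - 1) = e - r := by field_simp
  have h4 : Real.log e ≤ 0 := Real.log_nonpos he0.le he
  nlinarith [h2]

lemma psi_pos {r : ℝ} (h0 : 0 < r) (h1 : r ≤ 1) : 0 < r * (1 - Real.log r) := by
  have := Real.log_nonpos h0.le h1
  nlinarith

lemma psi_le_sqrt {r : ℝ} (h0 : 0 < r) (h1 : r ≤ 1) :
    r * (1 - Real.log r) ≤ 2 * Real.sqrt r := by
  set a := Real.sqrt r with ha
  have ha0 : 0 < a := Real.sqrt_pos.2 h0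
  have haa : a * a = r := Real.mul_self_sqrt h0.le
  have hlog : Real.log r = 2 * Real.log a := by
    rw [← haa, Real.log_mul (ne_of_gt ha0) (ne_of_gt ha0)]; ring
  have h2 : Real.log (1 / a) ≤ 1 / a - 1 := Real.log_le_sub_one_of_pos (by positivity)
  rw [Real.log_div one_ne_zero (ne_of_gt ha0), Real.log_one] at h2
  -- -log a ≤ 1/a - 1
  have h3 : -Real.log a ≤ 1 / a - 1 := by linarith
  have h4 : a * (-Real.log a) ≤ a * (1 / a - 1) := mul_le_mul_of_nonneg_left h3 ha0.le
  have h5 : a * (1 / a - 1) = 1 - a := by field_simp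
  -- goal : r (1 - log r) = a²(1 - 2 log a) ≤ 2a
  rw [hlog, ← haa]
  nlinarith [h4, ha0.le, sq_nonneg (a - 1)]

/-- FTC for continuous integrands. -/
lemma ftc {g : ℝ → E} (hg : Continuous g) (s t : ℝ) :
    HasDerivAt (fun r => ∫ τ in s..r, g τ) (g t) t :=
  integral_hasDerivAt_right (hg.intervalIntegrable _ _)
    hg.aestronglyMeasurable.stronglyMeasurableAtFilter hg.continuousAt

/-- The explicit supersolution of `r' = K r (1 - log r)`. -/
noncomputable def superSol (K L s t : ℝ) : ℝ := Real.exp (1 - L * Real.exp (-K * (t - s)))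

lemma superSol_pos (K L s t : ℝ) : 0 < superSol K L s t := Real.exp_pos _

lemma log_superSol (K L s t : ℝ) :
    Real.log (superSol K L s t) = 1 - L * Real.exp (-K * (t - s)) := Real.log_exp _

lemma hasDerivAt_superSol (K L s : ℝ) (t : ℝ) :
    HasDerivAt (fun t => superSol K L s t)
      (K * (superSol K L s t * (1 - Real.log (superSol K L s t)))) t := by
  have h1 : HasDerivAt (fun t : ℝ => -K * (t - s)) (-K) t := by
    simpa using (((hasDerivAt_id t).sub_const s).const_mul (-K))
  have h2 : HasDerivAt (fun t : ℝ => 1 - L * Real.exp (-K * (t - s)))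
      (-(L * (Real.exp (-K * (t - s)) * -K))) t := by
    simpa using ((h1.exp.const_mul L).const_sub 1)
  have h3 := h2.exp
  convert h3 using 1
  · rfl
  rw [log_superSol]
  unfold superSol
  ring

lemma superSol_le_one {K L s t T : ℝ} (hK : 0 < K) (hL : 0 < L) (ht : t ≤ T)
    (hc : 1 ≤ L * Real.exp (-K * (T - s))) : superSol K L s t ≤ 1 := by
  have h1 : Real.exp (-K * (T - s)) ≤ Real.exp (-K * (t - s)) := by
    apply Real.exp_le_exp.2; nlinarith
  have h2 : 1 ≤ L * Real.exp (-K * (t - s)) := by nlinarith [Real.exp_pos (-K * (T - s))]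
  unfold superSol
  calc Real.exp (1 - L * Real.exp (-K * (t - s))) ≤ Real.exp 0 := by
        apply Real.exp_le_exp.2; linarith
    _ = 1 := Real.exp_zero

lemma superSol_mono {K L s : ℝ} (hK : 0 < K) (hL : 0 < L) {t T : ℝ} (ht : t ≤ T) :
    superSol K L s t ≤ superSol K L s T := by
  apply Real.exp_le_exp.2
  have h1 : Real.exp (-K * (T - s)) ≤ Real.exp (-K * (t - s)) := by
    apply Real.exp_le_exp.2; nlinarith
  nlinarith


/-- Osgood forward uniqueness. -/
lemma osgood_forward {f f' : ℝ → E} {M s : ℝ} (hM : 0 ≤ M)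
    (hd : ∀ t, HasDerivAt f (f' t) t)
    (hb : ∀ t, 0 < ‖f t‖ → ‖f t‖ ≤ 1 → ‖f' t‖ ≤ M * (‖f t‖ * (1 - Real.log ‖f t‖)))
    (hs : f s = 0) : ∀ t, s ≤ t → f t = 0 := by
  intro t₀ ht₀
  rcases eq_or_lt_of_le ht₀ with h | h
  · exact h ▸ hs
  -- key : ∀ η > 0, ‖f t₀‖ ≤ η
  have key : ∀ η : ℝ, 0 < η → ‖f t₀‖ ≤ η := by
    intro η hη
    set K := M + 1 with hK
    have hKpos : 0 < K := by linarith
    set c := Real.exp (-K * (t₀ - s)) with hc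
    have hcpos : 0 < c := Real.exp_pos _
    set L := max (1 / c) ((1 - Real.log η) / c) with hL
    have hL1 : 1 ≤ L * c := by
      have : 1 / c ≤ L := le_max_left _ _
      calc (1:ℝ) = (1/c) * c := by field_simp
        _ ≤ L * c := by nlinarith
    have hLpos : 0 < L := by nlinarith
    have hL2 : 1 - Real.log η ≤ L * c := by
      have : (1 - Real.log η) / c ≤ L := le_max_right _ _
      calc 1 - Real.log η = ((1 - Real.log η)/c) * c := by field_simp
        _ ≤ L * c := by nlinarith
    set B := fun t => superSol K L s t with hB
    have hBt₀ : B t₀ ≤ η := by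
      have : B t₀ = Real.exp (1 - L * c) := rfl
      rw [this, ← Real.exp_log hη]
      apply Real.exp_le_exp.2; linarith
    have comp : ∀ x ∈ Icc s t₀, ‖f x‖ ≤ B x := by
      refine image_norm_le_of_norm_deriv_right_lt_deriv_boundary
        (fun x _ => (hd x).continuousAt.continuousWithinAt)
        (fun x _ => (hd x).hasDerivWithinAt)
        (by rw [hs, norm_zero]; exact (superSol_pos _ _ _ _).le)
        (fun x => hasDerivAt_superSol K L s x) ?_
      intro x hx hcontact
      have hBpos : 0 < B x := superSol_pos _ _ _ _
      have hBle1 : B x ≤ 1 := superSol_le_one hKpos hLpos hx.2.le (by rw [← hc]; linarith)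
      rw [show B x = superSol K L s x from rfl] at hBpos hBle1
      have h1 := hb x (hcontact ▸ hBpos) (hcontact ▸ hBle1)
      rw [hcontact] at h1
      have hψ : 0 < superSol K L s x * (1 - Real.log (superSol K L s x)) := by
        have h2 : 1 - Real.log (superSol K L s x) = L * Real.exp (-K * (x - s)) := by
          rw [log_superSol]; ring
        rw [h2]; positivity
      show ‖f' x‖ < K * (superSol K L s x * (1 - Real.log (superSol K L s x)))
      calc ‖f' x‖ ≤ M * (superSol K L s x * (1 - Real.log (superSol K L s x))) := h1
        _ < K * (superSol K L s x * (1 - Real.log (superSol K L s x))) := by rw [hK]; nlinarith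
    calc ‖f t₀‖ ≤ B t₀ := comp t₀ ⟨ht₀, le_refl _⟩
      _ ≤ η := hBt₀
  have : ‖f t₀‖ ≤ 0 := by
    by_contra hcon
    push_neg at hcon
    have := key (‖f t₀‖ / 2) (by linarith)
    linarith
  simpa using norm_le_zero_iff.1 this


variable (u : E → ℝ → E) (s : ℝ) (x : E) (h : ℝ)

/-- delayed Euler/Tonelli scheme, step `h`, valid up to time `s + k h`. -/
noncomputable def picardAux : ℕ → ℝ → E
  | 0 => fun _ => x
  | (k+1) => fun t => x + ∫ τ in s..(max s (min t (s + (k+1) * h))),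
      u (picardAux k (τ - h)) τ

variable {u h}
variable (hu_cont : Continuous fun p : E × ℝ => u p.1 p.2) (hh : 0 < h)

include hu_cont in
lemma picardAux_continuous : ∀ k, Continuous (picardAux u s x h k) := by
  intro k
  induction k with
  | zero => exact continuous_const
  | succ k ih =>
    show Continuous fun t => x + ∫ τ in s..(max s (min t (s + ((k:ℕ)+1) * h))),
      u (picardAux u s x h k (τ - h)) τ
    have hg : Continuous fun τ => u (picardAux u s x h k (τ - h)) τ :=
      hu_cont.comp ((ih.comp (continuous_id.sub continuous_const)).prodMk continuous_id)
    have hG : Continuous fun z => ∫ τ in s..z, u (picardAux u s x h k (τ - h)) τ :=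
      continuous_iff_continuousAt.2 fun z => (ftc hg s z).continuousAt
    exact continuous_const.add
      (hG.comp (continuous_const.max (continuous_id.min continuous_const)))

include hh in
lemma picardAux_const_before : ∀ k, ∀ t ≤ s, picardAux u s x h k t = x := by
  intro k
  cases k with
  | zero => intro t _; rfl
  | succ k =>
    intro t ht
    show x + ∫ τ in s..(max s (min t (s + ((k:ℕ)+1) * h))), u (picardAux u s x h k (τ - h)) τ = x
    have hkh : (0:ℝ) ≤ ((k:ℕ)+1) * h := mul_nonneg (by positivity) hh.le
    have hmax : max s (min t (s + ((k:ℕ)+1) * h)) = s := by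
      rcases le_total t (s + ((k:ℕ)+1)*h) with h1 | h1
      · rw [min_eq_left h1, max_eq_left ht]
      · rw [min_eq_right h1]; rw [max_eq_right (by linarith)]
        linarith
    rw [hmax, integral_same, add_zero]

include hh in
lemma picardAux_agree : ∀ k : ℕ, ∀ t ≤ s + (k:ℝ) * h,
    picardAux u s x h (k+1) t = picardAux u s x h k t := by
  intro k
  induction k with
  | zero =>
    intro t ht
    simp only [Nat.cast_zero, zero_mul, add_zero] at ht
    rw [picardAux_const_before s x hh (0+1) t ht, picardAux_const_before s x hh 0 t ht]
  | succ k ih =>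
    intro t ht
    have htr : t ≤ s + ((k:ℝ)+1) * h := by push_cast at ht; linarith
    simp only [picardAux]
    push_cast
    have hc1 : min t (s + ((k:ℝ)+1+1) * h) = t := by apply min_eq_left; nlinarith
    have hc2 : min t (s + ((k:ℝ)+1) * h) = t := by apply min_eq_left; linarith
    rw [hc1, hc2]
    congr 1
    apply integral_congr
    intro τ hτ
    rw [uIcc_of_le (le_max_left s t)] at hτ
    have hτ2 : τ - h ≤ s + k * h := by
      have h2 : max s t ≤ s + ((k:ℝ)+1) * h := by apply max_le _ htr; nlinarith
      have h3 := hτ.2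
      linarith
    exact congrArg (fun y => u y τ) (ih _ hτ2)

include hh in
lemma picardAux_chain : ∀ j k : ℕ, k ≤ j → ∀ t ≤ s + (k:ℝ) * h,
    picardAux u s x h j t = picardAux u s x h k t := by
  intro j
  induction j with
  | zero => intro k hk t _; rw [Nat.le_zero.1 hk]
  | succ j ih =>
    intro k hk t ht
    rcases Nat.lt_or_ge k (j+1) with h1 | h1
    · have hkj : k ≤ j := Nat.lt_succ_iff.1 h1
      have ht' : t ≤ s + (j:ℝ) * h := by
        have : (k:ℝ) * h ≤ (j:ℝ) * h := by
          apply mul_le_mul_of_nonneg_right _ hh.le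
          exact_mod_cast hkj
        linarith
      rw [picardAux_agree s x hh j t ht', ih k hkj t ht]
    · have : k = j + 1 := le_antisymm hk h1
      rw [this]

variable (u h) in
/-- The scheme as a single function. -/
noncomputable def scheme (t : ℝ) : E := picardAux u s x h (⌈(t - s)/h⌉₊ + 1) t

include hh in
lemma scheme_eq_picardAux : ∀ (t : ℝ) (k : ℕ), t ≤ s + (k:ℝ) * h →
    scheme u s x h t = picardAux u s x h k t := by
  intro t k hkt
  set K := ⌈(t - s)/h⌉₊ + 1 with hK
  have hKt : t ≤ s + (K:ℝ) * h := by
    have h1 : (t - s)/h ≤ ⌈(t - s)/h⌉₊ := Nat.le_ceil _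
    have h2 : (t-s)/h * h = t - s := div_mul_cancel₀ _ (ne_of_gt hh)
    have h3 : t - s ≤ (K:ℝ) * h := by
      rw [hK]; push_cast
      calc t - s = (t-s)/h * h := h2.symm
        _ ≤ (⌈(t - s)/h⌉₊ : ℝ) * h := mul_le_mul_of_nonneg_right h1 hh.le
        _ ≤ ((⌈(t - s)/h⌉₊ : ℝ) + 1) * h := by nlinarith
    linarith
  have e1 := picardAux_chain (u := u) s x hh (max K k) K (le_max_left _ _) t hKt
  have e2 := picardAux_chain (u := u) s x hh (max K k) k (le_max_right _ _) t hkt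
  rw [scheme, ← hK, ← e1, e2]



-- scheme properties

include hh in
lemma scheme_const_before : ∀ t ≤ s, scheme u s x h t = x := by
  intro t ht
  rw [scheme_eq_picardAux s x hh t 0 (by simpa using ht)]
  rfl

include hh hu_cont in
lemma scheme_continuous : Continuous (scheme u s x h) := by
  apply continuous_iff_continuousAt.2
  intro t₀
  set k := ⌈(t₀ + 1 - s)/h⌉₊ + 1 with hk
  have hk1 : t₀ + 1 ≤ s + (k:ℝ) * h := by
    have h1 : (t₀ + 1 - s)/h ≤ ⌈(t₀ + 1 - s)/h⌉₊ := Nat.le_ceil _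
    have h2 : (t₀+1-s)/h * h = t₀+1 - s := div_mul_cancel₀ _ (ne_of_gt hh)
    have h3 : t₀ + 1 - s ≤ (k:ℝ) * h := by
      rw [hk]; push_cast
      calc t₀+1 - s = (t₀+1-s)/h * h := h2.symm
        _ ≤ (⌈(t₀+1 - s)/h⌉₊ : ℝ) * h := mul_le_mul_of_nonneg_right h1 hh.le
        _ ≤ ((⌈(t₀+1 - s)/h⌉₊ : ℝ) + 1) * h := by nlinarith
    linarith
  apply ContinuousAt.congr ((picardAux_continuous s x hu_cont k).continuousAt)
  have hmem : Iio (t₀ + 1) ∈ nhds t₀ := Iio_mem_nhds (by linarith)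
  apply Filter.eventuallyEq_of_mem hmem
  intro t ht
  exact (scheme_eq_picardAux s x hh t k (by have : t < t₀ + 1 := ht; linarith)).symm

include hh in
lemma scheme_integral_eq : ∀ t, s ≤ t →
    scheme u s x h t = x + ∫ τ in s..t, u (scheme u s x h (τ - h)) τ := by
  intro t hst
  set j := ⌈(t - s)/h⌉₊ + 1 with hj
  have hjt : t ≤ s + (j:ℝ) * h := by
    have h1 : (t - s)/h ≤ ⌈(t - s)/h⌉₊ := Nat.le_ceil _
    have h2 : (t-s)/h * h = t - s := div_mul_cancel₀ _ (ne_of_gt hh)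
    have h3 : t - s ≤ (j:ℝ) * h := by
      rw [hj]; push_cast
      calc t - s = (t-s)/h * h := h2.symm
        _ ≤ (⌈(t - s)/h⌉₊ : ℝ) * h := mul_le_mul_of_nonneg_right h1 hh.le
        _ ≤ ((⌈(t - s)/h⌉₊ : ℝ) + 1) * h := by nlinarith
    linarith
  have hjt1 : t ≤ s + ((j:ℝ)+1) * h := by nlinarith
  have e1 : scheme u s x h t = picardAux u s x h (j+1) t := by
    rw [scheme_eq_picardAux s x hh t (j+1) (by push_cast; push_cast at hjt1; linarith)]
  rw [e1]
  show x + ∫ τ in s..(max s (min t (s + ((j:ℕ)+1) * h))), u (picardAux u s x h j (τ - h)) τ = _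
  have hmax : max s (min t (s + ((j:ℕ)+1) * h)) = t := by
    rw [min_eq_left (by push_cast; push_cast at hjt1; linarith), max_eq_right hst]
  rw [hmax]
  congr 1
  apply integral_congr
  intro τ hτ
  rw [uIcc_of_le hst] at hτ
  have : τ - h ≤ s + (j:ℝ) * h := by
    have := hτ.2; linarith
  exact congrArg (fun y => u y τ) (scheme_eq_picardAux s x hh (τ - h) j this).symm

section Abdd
variable (A : ℝ) (hA : ∀ y t, ‖u y t‖ ≤ A)

include hh hA hu_cont in
lemma scheme_lipschitz : ∀ t1 t2, t1 ≤ t2 →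
    ‖scheme u s x h t2 - scheme u s x h t1‖ ≤ A * (t2 - t1) := by
  have hA0 : 0 ≤ A := le_trans (norm_nonneg _) (hA x s)
  have key : ∀ t1 t2, s ≤ t1 → t1 ≤ t2 →
      ‖scheme u s x h t2 - scheme u s x h t1‖ ≤ A * (t2 - t1) := by
    intro t1 t2 hs1 h12
    have hg : Continuous fun τ => u (scheme u s x h (τ - h)) τ :=
      hu_cont.comp (((scheme_continuous s x hu_cont hh).comp
        (continuous_id.sub continuous_const)).prodMk continuous_id)
    rw [scheme_integral_eq s x hh t2 (le_trans hs1 h12), scheme_integral_eq s x hh t1 hs1]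
    have e1 : (x + ∫ τ in s..t2, u (scheme u s x h (τ - h)) τ)
        - (x + ∫ τ in s..t1, u (scheme u s x h (τ - h)) τ)
        = ∫ τ in t1..t2, u (scheme u s x h (τ - h)) τ := by
      rw [add_sub_add_left_eq_sub]
      exact integral_interval_sub_left (hg.intervalIntegrable _ _) (hg.intervalIntegrable _ _)
    rw [e1]
    calc ‖∫ τ in t1..t2, u (scheme u s x h (τ - h)) τ‖ ≤ A * |t2 - t1| :=
          norm_integral_le_of_norm_le_const (fun τ _ => hA _ τ)
      _ = A * (t2 - t1) := by rw [abs_of_nonneg (by linarith)]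
  intro t1 t2 h12
  rcases le_total s t1 with hs1 | hs1
  · exact key t1 t2 hs1 h12
  · rcases le_total s t2 with hs2 | hs2
    · rw [scheme_const_before s x hh t1 hs1]
      have := key s t2 (le_refl s) hs2
      rw [scheme_const_before s x hh s (le_refl s)] at this
      calc ‖scheme u s x h t2 - x‖ ≤ A * (t2 - s) := this
        _ ≤ A * (t2 - t1) := by nlinarith
    · rw [scheme_const_before s x hh t1 hs1, scheme_const_before s x hh t2 hs2]
      simp
      nlinarith

end Abdd

include hh hu_cont in
lemma scheme_hasDerivWithinAt : ∀ t, s ≤ t →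
    HasDerivWithinAt (scheme u s x h) (u (scheme u s x h (t - h)) t) (Ici t) t := by
  intro t hst
  have hg : Continuous fun τ => u (scheme u s x h (τ - h)) τ :=
    hu_cont.comp (((scheme_continuous s x hu_cont hh).comp
      (continuous_id.sub continuous_const)).prodMk continuous_id)
  have hF := (ftc hg s t).hasDerivWithinAt (s := Ici t)
  have hF' : HasDerivWithinAt (fun r => x + ∫ τ in s..r, u (scheme u s x h (τ - h)) τ)
      (u (scheme u s x h (t - h)) t) (Ici t) t := by
    simpa using hF.const_add x
  apply hF'.congr
  · intro r hr
    exact scheme_integral_eq s x hh r (le_trans hst hr)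
  · exact scheme_integral_eq s x hh t hst



end LLflow
namespace LLflow
variable {E : Type*} [NormedAddCommGroup E] [NormedSpace ℝ E] [CompleteSpace E]
variable {u : E → ℝ → E}

lemma scheme_dist_le
    (hu_cont : Continuous fun p : E × ℝ => u p.1 p.2)
    (A M : ℝ) (hA : ∀ y t, ‖u y t‖ ≤ A) (hA1 : 1 ≤ A) (hM : 0 ≤ M)
    (hLL : ∀ (p q : E) (t e : ℝ), 0 < e → e ≤ 1 → ‖p - q‖ ≤ e →
      ‖u p t - u q t‖ ≤ M * (e * (1 - Real.log e)))
    (s : ℝ) (x : E) {h1 h2 : ℝ} (hh1 : 0 < h1) (hh2 : 0 < h2) (T : ℝ) (hT : s ≤ T)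
    (hcond : 1 ≤ (1 - Real.log (2 * (A * (h1 + h2)))) * Real.exp (-(M+1) * (T - s))) :
    ∀ t ∈ Icc s T, ‖scheme u s x h1 t - scheme u s x h2 t‖ ≤
      Real.exp (1 - (1 - Real.log (2 * (A * (h1 + h2)))) * Real.exp (-(M+1) * (T - s))) := by
  set δ := A * (h1 + h2) with hδdef
  have hδ : 0 < δ := by positivity
  set K := M + 1 with hKdef
  have hK : 0 < K := by linarith
  set L := 1 - Real.log (2 * δ) with hLdef
  have hc : 0 < Real.exp (-K * (T - s)) := Real.exp_pos _
  have hL : 0 < L := by nlinarith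
  set X1 := scheme u s x h1 with hX1
  set X2 := scheme u s x h2 with hX2
  have main : ∀ t ∈ Icc s T, ‖X1 t - X2 t‖ ≤ superSol K L s t - δ := by
    refine image_norm_le_of_norm_deriv_right_lt_deriv_boundary
      (f' := fun t => u (X1 (t - h1)) t - u (X2 (t - h2)) t)
      (B' := fun t => K * (superSol K L s t * (1 - Real.log (superSol K L s t))))
      (((scheme_continuous s x hu_cont hh1).sub
        (scheme_continuous s x hu_cont hh2)).continuousOn)
      (fun t ht => ((scheme_hasDerivWithinAt s x hu_cont hh1 t ht.1).sub
        (scheme_hasDerivWithinAt s x hu_cont hh2 t ht.1)))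
      ?_ (fun t => (hasDerivAt_superSol K L s t).sub_const δ) ?_
    · rw [Pi.sub_apply, scheme_const_before s x hh1 s (le_refl s), scheme_const_before s x hh2 s (le_refl s)]
      simp only [sub_self, norm_zero]
      have : superSol K L s s = 2 * δ := by
        unfold superSol
        rw [sub_self, neg_mul, mul_zero, neg_zero, Real.exp_zero, mul_one, hLdef]
        rw [sub_sub_cancel, Real.exp_log (by positivity)]
      rw [this]; linarith
    · intro t ht hcontact
      have hBpos : 0 < superSol K L s t := superSol_pos _ _ _ _
      have hB1 : superSol K L s t ≤ 1 := superSol_le_one hK hL ht.2.le hcond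
      have hdist : ‖X1 (t - h1) - X2 (t - h2)‖ ≤ superSol K L s t := by
        have l1 : ‖X1 t - X1 (t - h1)‖ ≤ A * h1 := by
          have := scheme_lipschitz s x hu_cont hh1 A hA (t - h1) t (by linarith)
          rw [← hX1] at this
          calc ‖X1 t - X1 (t-h1)‖ ≤ A * (t - (t - h1)) := this
            _ = A * h1 := by ring_nf
        have l2 : ‖X2 t - X2 (t - h2)‖ ≤ A * h2 := by
          have := scheme_lipschitz s x hu_cont hh2 A hA (t - h2) t (by linarith)
          rw [← hX2] at this
          calc ‖X2 t - X2 (t-h2)‖ ≤ A * (t - (t - h2)) := this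
            _ = A * h2 := by ring_nf
        calc ‖X1 (t - h1) - X2 (t - h2)‖
            = ‖(X1 t - X2 t) - (X1 t - X1 (t - h1)) + (X2 t - X2 (t - h2))‖ := by
              congr 1; abel
          _ ≤ ‖(X1 t - X2 t) - (X1 t - X1 (t - h1))‖ + ‖X2 t - X2 (t - h2)‖ :=
              norm_add_le _ _
          _ ≤ ‖X1 t - X2 t‖ + ‖X1 t - X1 (t - h1)‖ + ‖X2 t - X2 (t - h2)‖ := by
              have := norm_sub_le (X1 t - X2 t) (X1 t - X1 (t - h1))
              linarith
          _ ≤ (superSol K L s t - δ) + A * h1 + A * h2 := by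
              rw [Pi.sub_apply, ← hX1, ← hX2] at hcontact; rw [hcontact]; linarith
          _ = superSol K L s t := by rw [hδdef]; ring
      have hψ : 0 < superSol K L s t * (1 - Real.log (superSol K L s t)) := by
        have h2 : 1 - Real.log (superSol K L s t) = L * Real.exp (-K * (t - s)) := by
          rw [log_superSol]; ring
        rw [h2]; positivity
      calc ‖u (X1 (t - h1)) t - u (X2 (t - h2)) t‖
          ≤ M * (superSol K L s t * (1 - Real.log (superSol K L s t))) :=
            hLL _ _ t _ hBpos hB1 hdist
        _ < K * (superSol K L s t * (1 - Real.log (superSol K L s t))) := by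
            rw [hKdef]; nlinarith
  intro t ht
  calc ‖X1 t - X2 t‖ ≤ superSol K L s t - δ := main t ht
    _ ≤ superSol K L s T := by
        have := superSol_mono hK hL (s := s) ht.2
        linarith
    _ = Real.exp (1 - L * Real.exp (-K * (T - s))) := rfl


lemma scheme_cauchy
    (hu_cont : Continuous fun p : E × ℝ => u p.1 p.2)
    (A M : ℝ) (hA : ∀ y t, ‖u y t‖ ≤ A) (hA1 : 1 ≤ A) (hM : 0 ≤ M)
    (hLL : ∀ (p q : E) (t e : ℝ), 0 < e → e ≤ 1 → ‖p - q‖ ≤ e →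
      ‖u p t - u q t‖ ≤ M * (e * (1 - Real.log e)))
    (s : ℝ) (x : E) (T : ℝ) (hT : s ≤ T) :
    ∀ ε > 0, ∃ N : ℕ, ∀ n ≥ N, ∀ m ≥ N, ∀ t ∈ Icc s T,
      ‖scheme u s x (1/(n+1 : ℝ)) t - scheme u s x (1/(m+1 : ℝ)) t‖ ≤ ε := by
  intro ε hε
  set c := Real.exp (-(M+1) * (T - s)) with hcdef
  have hc : 0 < c := Real.exp_pos _
  set θ := 1 - max (1/c) ((1 - Real.log ε)/c) with hθdef
  have hexpθ : 0 < Real.exp θ := Real.exp_pos _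
  refine ⟨⌈4*A/Real.exp θ⌉₊, ?_⟩
  intro n hn m hm t ht
  set N := ⌈4*A/Real.exp θ⌉₊ with hN
  have hh1 : 0 < 1/(n+1 : ℝ) := by positivity
  have hh2 : 0 < 1/(m+1 : ℝ) := by positivity
  set δ := A * (1/(n+1 : ℝ) + 1/(m+1 : ℝ)) with hδdef
  have hδpos : 0 < δ := by positivity
  -- 2δ ≤ exp θ
  have hNle : 4*A/Real.exp θ ≤ (N : ℝ) := Nat.le_ceil _
  have h4A : 4*A ≤ ((N : ℝ) + 1) * Real.exp θ := by
    have h1 : 4*A ≤ (N:ℝ) * Real.exp θ := by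
      rw [div_le_iff₀ hexpθ] at hNle; linarith
    nlinarith
  have hn1 : 1/(n+1 : ℝ) ≤ 1/((N:ℝ)+1) := by
    apply one_div_le_one_div_of_le (by positivity)
    have : (N:ℝ) ≤ n := by exact_mod_cast hn
    linarith
  have hm1 : 1/(m+1 : ℝ) ≤ 1/((N:ℝ)+1) := by
    apply one_div_le_one_div_of_le (by positivity)
    have : (N:ℝ) ≤ m := by exact_mod_cast hm
    linarith
  have h2δ : 2 * δ ≤ Real.exp θ := by
    have hNpos : (0:ℝ) < (N:ℝ) + 1 := by positivity
    have hsum : 1/(n+1 : ℝ) + 1/(m+1 : ℝ) ≤ 2/((N:ℝ)+1) := by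
      have h22 : 2/((N:ℝ)+1) = 1/((N:ℝ)+1) + 1/((N:ℝ)+1) := by ring
      rw [h22]; linarith
    have step : 2 * δ ≤ 4 * A / ((N:ℝ)+1) := by
      rw [hδdef]
      calc 2 * (A * (1/(n+1:ℝ) + 1/(m+1:ℝ))) = 2*A*(1/(n+1:ℝ)+1/(m+1:ℝ)) := by ring
        _ ≤ 2*A*(2/((N:ℝ)+1)) := by nlinarith
        _ = 4*A/((N:ℝ)+1) := by ring
    calc 2*δ ≤ 4*A/((N:ℝ)+1) := step
      _ ≤ Real.exp θ := by rw [div_le_iff₀ hNpos]; nlinarith [h4A]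
  have hlog : Real.log (2*δ) ≤ θ := by
    calc Real.log (2*δ) ≤ Real.log (Real.exp θ) :=
          Real.log_le_log (by positivity) h2δ
      _ = θ := Real.log_exp _
  set L := 1 - Real.log (2*δ) with hLdef
  have hLge : max (1/c) ((1 - Real.log ε)/c) ≤ L := by rw [hLdef, hθdef] at *; linarith
  have hcond : 1 ≤ L * c := by
    have h1 : 1/c ≤ L := le_trans (le_max_left _ _) hLge
    calc (1:ℝ) = (1/c) * c := by field_simp
      _ ≤ L * c := by nlinarith
  have hfin : Real.exp (1 - L * c) ≤ ε := by
    have h1 : (1 - Real.log ε)/c ≤ L := le_trans (le_max_right _ _) hLge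
    have h2 : 1 - Real.log ε ≤ L * c := by
      calc 1 - Real.log ε = ((1 - Real.log ε)/c) * c := by field_simp
        _ ≤ L * c := by nlinarith
    calc Real.exp (1 - L * c) ≤ Real.exp (Real.log ε) := Real.exp_le_exp.2 (by linarith)
      _ = ε := Real.exp_log hε
  have := scheme_dist_le hu_cont A M hA hA1 hM hLL s x hh1 hh2 T hT
    (by rw [hδdef] at hLdef; rw [← hcdef, ← hLdef]; exact hcond) t ht
  rw [hδdef] at hLdef
  rw [← hcdef, ← hLdef] at this
  exact le_trans this hfin


set_option maxHeartbeats 1000000 in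
lemma exists_solution_forward
    (hu_cont : Continuous fun p : E × ℝ => u p.1 p.2)
    (A M : ℝ) (hA : ∀ y t, ‖u y t‖ ≤ A) (hA1 : 1 ≤ A) (hM : 0 ≤ M)
    (hLL : ∀ (p q : E) (t e : ℝ), 0 < e → e ≤ 1 → ‖p - q‖ ≤ e →
      ‖u p t - u q t‖ ≤ M * (e * (1 - Real.log e)))
    (s : ℝ) (x : E) :
    ∃ X : ℝ → E, Continuous X ∧ (∀ t ≤ s, X t = x) ∧
      (∀ t, s ≤ t → X t = x + ∫ τ in s..t, u (X τ) τ) := by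
  have hA0 : (0:ℝ) ≤ A := by linarith
  set Xn := fun (n : ℕ) => scheme u s x (1/(n+1:ℝ)) with hXn
  have hhn : ∀ n : ℕ, (0:ℝ) < 1/(n+1:ℝ) := fun n => by positivity
  -- Cauchy
  have hCauchy : ∀ t : ℝ, CauchySeq (fun n => Xn n t) := by
    intro t
    rcases le_total t s with hts | hst
    · have : (fun n => Xn n t) = fun _ => x :=
        funext fun n => scheme_const_before s x (hhn n) t hts
      rw [this]
      exact cauchySeq_const x
    · apply Metric.cauchySeq_iff.2
      intro ε hε
      obtain ⟨N, hN⟩ := scheme_cauchy hu_cont A M hA hA1 hM hLL s x t hst (ε/2) (by linarith)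
      refine ⟨N, fun m hm n hn => ?_⟩
      rw [dist_eq_norm]
      have := hN m hm n hn t ⟨hst, le_refl t⟩
      calc ‖Xn m t - Xn n t‖ ≤ ε/2 := this
        _ < ε := by linarith
  have hlim : ∀ t, ∃ y, Filter.Tendsto (fun n => Xn n t) Filter.atTop (nhds y) :=
    fun t => cauchySeq_tendsto_of_complete (hCauchy t)
  choose X hX using hlim
  -- constant before s
  have hXconst : ∀ t ≤ s, X t = x := by
    intro t hts
    have h1 : (fun n => Xn n t) = fun _ => x :=
      funext fun n => scheme_const_before s x (hhn n) t hts
    have h2 := hX t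
    rw [h1] at h2
    exact tendsto_nhds_unique h2 tendsto_const_nhds
  -- Lipschitz
  have hXlip : ∀ t1 t2, t1 ≤ t2 → ‖X t2 - X t1‖ ≤ A * (t2 - t1) := by
    intro t1 t2 h12
    have htend : Filter.Tendsto (fun n => ‖Xn n t2 - Xn n t1‖) Filter.atTop
        (nhds ‖X t2 - X t1‖) := ((hX t2).sub (hX t1)).norm
    apply le_of_tendsto htend
    exact Filter.Eventually.of_forall fun n =>
      scheme_lipschitz s x hu_cont (hhn n) A hA t1 t2 h12
  have hXcont : Continuous X := by
    have : LipschitzWith (Real.toNNReal A) X := by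
      apply LipschitzWith.of_dist_le_mul
      intro a b
      rw [Real.coe_toNNReal A hA0, dist_eq_norm]
      rcases le_total a b with hab | hab
      · rw [norm_sub_rev]
        calc ‖X b - X a‖ ≤ A * (b - a) := hXlip a b hab
          _ ≤ A * dist a b := by
              rw [dist_comm, Real.dist_eq, abs_of_nonneg (by linarith)]
      · calc ‖X a - X b‖ ≤ A * (a - b) := hXlip b a hab
          _ ≤ A * dist a b := by rw [Real.dist_eq, abs_of_nonneg (by linarith)]
    exact this.continuous
  -- uniform closeness
  have hunif : ∀ T, s ≤ T → ∀ ε > 0, ∃ N : ℕ, ∀ n ≥ N, ∀ t ∈ Icc s T,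
      ‖Xn n t - X t‖ ≤ ε := by
    intro T hT ε hε
    obtain ⟨N, hN⟩ := scheme_cauchy hu_cont A M hA hA1 hM hLL s x T hT ε hε
    refine ⟨N, fun n hn t ht => ?_⟩
    have htend : Filter.Tendsto (fun m => ‖Xn n t - Xn m t‖) Filter.atTop
        (nhds ‖Xn n t - X t‖) := (tendsto_const_nhds.sub (hX t)).norm
    apply le_of_tendsto htend
    apply Filter.eventually_atTop.2
    exact ⟨N, fun m hm => hN n hn m hm t ht⟩
  -- integral equation
  refine ⟨X, hXcont, hXconst, ?_⟩
  intro t hst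
  have hg : Continuous fun τ => u (X τ) τ :=
    hu_cont.comp (hXcont.prodMk continuous_id)
  set I := ∫ τ in s..t, u (X τ) τ with hI
  have claim : ∀ ε > 0, ‖X t - (x + I)‖ ≤ ε := by
    intro ε hε
    set M1 := M + 1 with hM1
    have hM1pos : (0:ℝ) < M1 := by linarith
    have htspos : (0:ℝ) < t - s + 1 := by linarith
    set e0 := min 1 ((ε / (3 * M1 * (t - s + 1)))^2) with he0def
    have he0pos : 0 < e0 := by
      apply lt_min one_pos
      positivity
    have he0le1 : e0 ≤ 1 := min_le_left _ _
    have hsqrt : Real.sqrt e0 ≤ ε / (3 * M1 * (t - s + 1)) := by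
      have h1 : e0 ≤ (ε / (3 * M1 * (t - s + 1)))^2 := min_le_right _ _
      calc Real.sqrt e0 ≤ Real.sqrt ((ε / (3 * M1 * (t - s + 1)))^2) :=
            Real.sqrt_le_sqrt h1
        _ = ε / (3 * M1 * (t - s + 1)) := Real.sqrt_sq (by positivity)
    obtain ⟨N1, hN1⟩ := hunif t hst (e0/2) (by linarith)
    set N2 := ⌈2*A/e0⌉₊ with hN2def
    have hN2 : ∀ n ≥ N2, A * (1/(n+1:ℝ)) ≤ e0/2 := by
      intro n hn
      have h1 : 2*A/e0 ≤ (N2:ℝ) := Nat.le_ceil _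
      have h2 : (N2:ℝ) ≤ n := by exact_mod_cast hn
      have h3 : 2*A ≤ ((n:ℝ)+1) * e0 := by
        rw [div_le_iff₀ he0pos] at h1
        nlinarith
      rw [mul_one_div, div_le_iff₀ (by positivity)]
      nlinarith
    obtain ⟨N3, hN3⟩ := hunif t hst (ε/3) (by linarith)
    set n := max (max N1 N2) N3 with hn
    have hn1 : N1 ≤ n := le_trans (le_max_left _ _) (le_max_left _ _)
    have hn2 : N2 ≤ n := le_trans (le_max_right _ _) (le_max_left _ _)
    have hn3 : N3 ≤ n := le_max_right _ _
    set hstep := (1/((n:ℕ)+1:ℝ)) with hstepdef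
    have hgn : Continuous fun τ => u (Xn n (τ - hstep)) τ :=
      hu_cont.comp (((scheme_continuous s x hu_cont (hhn n)).comp
        (continuous_id.sub continuous_const)).prodMk continuous_id)
    have hXnt : Xn n t = x + ∫ τ in s..t, u (Xn n (τ - hstep)) τ :=
      scheme_integral_eq s x (hhn n) t hst
    have hIdiff : ‖(∫ τ in s..t, u (Xn n (τ - hstep)) τ) - I‖ ≤ 2*ε/3 := by
      rw [hI, ← intervalIntegral.integral_sub (hgn.intervalIntegrable _ _)
        (hg.intervalIntegrable _ _)]
      have hbound : ∀ τ ∈ Set.uIoc s t,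
          ‖u (Xn n (τ - hstep)) τ - u (X τ) τ‖ ≤ M1 * (2 * Real.sqrt e0) := by
        intro τ hτ
        rw [Set.uIoc_of_le hst] at hτ
        have hτs : s ≤ τ := hτ.1.le
        have hd1 : ‖Xn n τ - Xn n (τ - hstep)‖ ≤ A * hstep := by
          have := scheme_lipschitz s x hu_cont (hhn n) A hA (τ - hstep) τ
            (by rw [hstepdef]; have := hhn n; linarith)
          calc ‖Xn n τ - Xn n (τ - hstep)‖ ≤ A * (τ - (τ - hstep)) := this
            _ = A * hstep := by ring_nf
        have hd2 : ‖Xn n τ - X τ‖ ≤ e0/2 := hN1 n hn1 τ ⟨hτs, hτ.2⟩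
        have hdist : ‖Xn n (τ - hstep) - X τ‖ ≤ e0 := by
          have h1 : A * hstep ≤ e0/2 := hN2 n hn2
          calc ‖Xn n (τ - hstep) - X τ‖
              = ‖(Xn n τ - X τ) - (Xn n τ - Xn n (τ - hstep))‖ := by congr 1; abel
            _ ≤ ‖Xn n τ - X τ‖ + ‖Xn n τ - Xn n (τ - hstep)‖ := norm_sub_le _ _
            _ ≤ e0/2 + A * hstep := by linarith
            _ ≤ e0 := by linarith
        calc ‖u (Xn n (τ - hstep)) τ - u (X τ) τ‖
            ≤ M * (e0 * (1 - Real.log e0)) := hLL _ _ τ e0 he0pos he0le1 hdist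
          _ ≤ M1 * (e0 * (1 - Real.log e0)) := by
              have := psi_pos he0pos he0le1
              nlinarith
          _ ≤ M1 * (2 * Real.sqrt e0) := by
              have := psi_le_sqrt he0pos he0le1
              nlinarith
      calc ‖∫ τ in s..t, (u (Xn n (τ - hstep)) τ - u (X τ) τ)‖
          ≤ M1 * (2 * Real.sqrt e0) * |t - s| :=
            intervalIntegral.norm_integral_le_of_norm_le_const hbound
        _ ≤ M1 * (2 * Real.sqrt e0) * (t - s + 1) := by
            have h1 : |t - s| = t - s := abs_of_nonneg (by linarith)
            have h2 : (0:ℝ) ≤ M1 * (2 * Real.sqrt e0) := by positivity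
            nlinarith
        _ ≤ 2*ε/3 := by
            have h2 : Real.sqrt e0 * (3 * M1 * (t - s + 1)) ≤ ε := by
              rw [← le_div_iff₀ (by positivity)]
              exact hsqrt
            nlinarith [Real.sqrt_nonneg e0]
    have hclose : ‖X t - Xn n t‖ ≤ ε/3 := by
      rw [norm_sub_rev]
      exact hN3 n hn3 t ⟨hst, le_refl t⟩
    calc ‖X t - (x + I)‖
        = ‖(X t - Xn n t) + ((∫ τ in s..t, u (Xn n (τ - hstep)) τ) - I)‖ := by
          rw [hXnt]; congr 1; abel
      _ ≤ ‖X t - Xn n t‖ + ‖(∫ τ in s..t, u (Xn n (τ - hstep)) τ) - I‖ := norm_add_le _ _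
      _ ≤ ε/3 + 2*ε/3 := by linarith
      _ = ε := by ring
  have : ‖X t - (x + I)‖ ≤ 0 := by
    by_contra hcon
    push_neg at hcon
    have := claim (‖X t - (x + I)‖/2) (by linarith)
    linarith
  have := norm_le_zero_iff.1 this
  rw [sub_eq_zero] at this
  exact this


lemma exists_global_solution
    (hu_cont : Continuous fun p : E × ℝ => u p.1 p.2)
    (A M : ℝ) (hA : ∀ y t, ‖u y t‖ ≤ A) (hA1 : 1 ≤ A) (hM : 0 ≤ M)
    (hLL : ∀ (p q : E) (t e : ℝ), 0 < e → e ≤ 1 → ‖p - q‖ ≤ e →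
      ‖u p t - u q t‖ ≤ M * (e * (1 - Real.log e)))
    (s : ℝ) (x : E) :
    ∃ X : ℝ → E, X s = x ∧ ∀ t, HasDerivAt X (u (X t) t) t := by
  obtain ⟨Xp, hXpc, hXpconst, hXpint⟩ :=
    exists_solution_forward hu_cont A M hA hA1 hM hLL s x
  set v : E → ℝ → E := fun y τ => -u y (2*s - τ) with hv
  have hv_cont : Continuous fun p : E × ℝ => v p.1 p.2 :=
    (hu_cont.comp (continuous_fst.prodMk (continuous_const.sub continuous_snd))).neg
  have hvA : ∀ y t, ‖v y t‖ ≤ A := fun y t => by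
    rw [hv]; simpa using hA y (2*s - t)
  have hvLL : ∀ (p q : E) (t e : ℝ), 0 < e → e ≤ 1 → ‖p - q‖ ≤ e →
      ‖v p t - v q t‖ ≤ M * (e * (1 - Real.log e)) := by
    intro p q t e h0 h1 hd
    have : v p t - v q t = -(u p (2*s-t) - u q (2*s-t)) := by rw [hv]; simp only [neg_sub_neg, neg_sub]
    rw [this, norm_neg]
    exact hLL p q (2*s-t) e h0 h1 hd
  obtain ⟨Y, hYc, hYconst, hYint⟩ :=
    exists_solution_forward hv_cont A M hvA hA1 hM hvLL s x
  set W : ℝ → E := fun t => if t ≤ s then Y (2*s - t) else Xp t with hW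
  have hYs : Y (2*s - s) = x := hYconst _ (by linarith)
  have hXps : Xp s = x := hXpconst s (le_refl s)
  have hWcont : Continuous W := by
    apply Continuous.if_le (hYc.comp (continuous_const.sub continuous_id)) hXpc
      continuous_id continuous_const
    intro a ha
    have ha' : a = s := ha
    show Y (2*s - a) = Xp a
    rw [ha', hYs, hXps]
  have hWXp : ∀ t, s ≤ t → W t = Xp t := by
    intro t ht
    rcases eq_or_lt_of_le ht with h | h
    · rw [hW]; simp only [← h, if_pos (le_refl s)]; rw [hYs, hXps]
    · rw [hW]; simp only [if_neg (not_le.2 h)]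
  have hWY : ∀ t, t ≤ s → W t = Y (2*s - t) := fun t ht => if_pos ht
  set w : ℝ → E := fun τ => u (W τ) τ with hw
  have hwcont : Continuous w := hu_cont.comp (hWcont.prodMk continuous_id)
  set Z : ℝ → E := fun t => x + ∫ τ in s..t, w τ with hZ
  have hZW : ∀ t, Z t = W t := by
    intro t
    rcases le_total s t with hst | hts
    · have h1 : ∀ τ ∈ uIcc s t, w τ = u (Xp τ) τ := by
        intro τ hτ
        rw [uIcc_of_le hst] at hτ
        rw [hw]
        exact congrArg (fun y => u y τ) (hWXp τ hτ.1)
      have h2 : (∫ τ in s..t, w τ) = ∫ τ in s..t, u (Xp τ) τ := integral_congr h1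
      rw [show Z t = x + ∫ τ in s..t, w τ from rfl, h2, ← hXpint t hst, hWXp t hst]
    · set f : ℝ → E := fun σ => u (Y σ) (2*s - σ) with hf
      have h1 : ∀ τ ∈ uIcc s t, w τ = f (2*s - τ) := by
        intro τ hτ
        rw [uIcc_of_ge hts] at hτ
        rw [hw, hf]
        simp only
        rw [hWY τ hτ.2]
        exact congrArg (u (Y (2*s - τ))) (by ring)
      have h2 : (∫ τ in s..t, w τ) = ∫ τ in s..t, f (2*s - τ) := integral_congr h1
      have h3 : (∫ τ in s..t, f (2*s - τ)) = ∫ σ in (2*s - t)..(2*s - s), f σ :=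
        intervalIntegral.integral_comp_sub_left f (2*s)
      have hfc : Continuous f :=
        hu_cont.comp (hYc.prodMk (continuous_const.sub continuous_id))
      have h4 : Y (2*s - t) = x + ∫ σ in s..(2*s - t), v (Y σ) σ :=
        hYint (2*s - t) (by linarith)
      have h5 : (∫ σ in s..(2*s - t), v (Y σ) σ) = -∫ σ in s..(2*s - t), f σ := by
        rw [← intervalIntegral.integral_neg]
      have h6 : (∫ σ in (2*s - t)..(2*s - s), f σ) = -∫ σ in s..(2*s - t), f σ := by
        rw [show 2*s - s = s by ring]
        exact intervalIntegral.integral_symm _ _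
      have h7 : Z t = x + -∫ σ in s..(2*s - t), f σ := by
        rw [show Z t = x + ∫ τ in s..t, w τ from rfl, h2, h3, h6]
      rw [h7, hWY t hts, h4, h5]
  have hZderiv : ∀ t, HasDerivAt Z (w t) t := fun t => by
    exact (ftc hwcont s t).const_add x
  refine ⟨Z, ?_, ?_⟩
  · rw [show Z s = x + ∫ τ in s..s, w τ from rfl, integral_same, add_zero]
  · intro t
    have h1 := hZderiv t
    have h2 : w t = u (Z t) t := by
      rw [hw]
      exact congrArg (fun y => u y t) (hZW t).symm
    rwa [h2] at h1

lemma solution_unique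
    (M : ℝ) (hM : 0 ≤ M)
    (hLL : ∀ (p q : E) (t e : ℝ), 0 < e → e ≤ 1 → ‖p - q‖ ≤ e →
      ‖u p t - u q t‖ ≤ M * (e * (1 - Real.log e)))
    (s : ℝ) {X Y : ℝ → E}
    (hX : ∀ t, HasDerivAt X (u (X t) t) t)
    (hY : ∀ t, HasDerivAt Y (u (Y t) t) t)
    (hXY : X s = Y s) : X = Y := by
  funext t
  set f : ℝ → E := fun t => X t - Y t with hf
  set f' : ℝ → E := fun t => u (X t) t - u (Y t) t with hf'
  have hd : ∀ t, HasDerivAt f (f' t) t := fun t => (hX t).sub (hY t)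
  have hb : ∀ τ, 0 < ‖f τ‖ → ‖f τ‖ ≤ 1 →
      ‖f' τ‖ ≤ M * (‖f τ‖ * (1 - Real.log ‖f τ‖)) :=
    fun τ h0 h1 => hLL _ _ τ _ h0 h1 (le_refl _)
  have hfs : f s = 0 := sub_eq_zero.2 hXY
  have key : f t = 0 := by
    rcases le_total s t with hst | hts
    · exact osgood_forward hM hd hb hfs t hst
    · set g : ℝ → E := fun τ => f (2*s - τ) with hg
      set g' : ℝ → E := fun τ => (-1 : ℝ) • f' (2*s - τ) with hg'
      have hgd : ∀ τ, HasDerivAt g (g' τ) τ := by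
        intro τ
        have hinner : HasDerivAt (fun τ : ℝ => 2*s - τ) (-1) τ := by
          simpa using ((hasDerivAt_id τ).const_sub (2*s))
        exact (hd (2*s - τ)).scomp τ hinner
      have hgb : ∀ τ, 0 < ‖g τ‖ → ‖g τ‖ ≤ 1 →
          ‖g' τ‖ ≤ M * (‖g τ‖ * (1 - Real.log ‖g τ‖)) := by
        intro τ h0 h1
        have e1 : ‖g' τ‖ = ‖f' (2*s - τ)‖ := by
          rw [hg']; simp
        rw [e1]
        exact hb (2*s - τ) h0 h1
      have hgs : g s = 0 := by
        rw [hg]; simp only [show 2*s - s = s by ring]; exact hfs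
      have := osgood_forward hM hgd hgb hgs (2*s - t) (by linarith)
      rw [hg] at this
      simpa [show 2*s - (2*s - t) = t by ring] using this
  rw [hf] at key
  exact sub_eq_zero.1 key

end LLflow

theorem logLipschitz_flow_exists_unique
    (φ : ℝ → ℝ) (hφ1 : ∀ r : ℝ, 0 < r → r ≤ 1 → φ r = r * (1 - Real.log r))
    (hφ2 : ∀ r : ℝ, 1 < r → φ r = 1)
    (u : EuclideanSpace ℝ (Fin 2) → ℝ → EuclideanSpace ℝ (Fin 2))
    (hu_cont : Continuous fun p : EuclideanSpace ℝ (Fin 2) × ℝ => u p.1 p.2)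
    (A : ℝ) (hu_bdd : ∀ x t, ‖u x t‖ ≤ A)
    (M : ℝ) (hu_LL : ∀ x y t, ‖u x t - u y t‖ ≤ M * φ ‖x - y‖) :
    ∀ (s : ℝ) (x : EuclideanSpace ℝ (Fin 2)),
      ∃! X : ℝ → EuclideanSpace ℝ (Fin 2),
        X s = x ∧ ∀ t : ℝ, HasDerivAt X (u (X t) t) t := by
  intro s x
  have hM : 0 ≤ M := by
    set y₀ : EuclideanSpace ℝ (Fin 2) := EuclideanSpace.single (0 : Fin 2) (1/2 : ℝ) with hy₀
    have hn : ‖(0 : EuclideanSpace ℝ (Fin 2)) - y₀‖ = 1/2 := by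
      rw [zero_sub, norm_neg, hy₀, EuclideanSpace.norm_single]
      norm_num
    have h1 := hu_LL 0 y₀ 0
    rw [hn, hφ1 (1/2) (by norm_num) (by norm_num)] at h1
    have h2 : Real.log (1/2 : ℝ) < 0 := Real.log_neg (by norm_num) (by norm_num)
    nlinarith [norm_nonneg (u 0 0 - u y₀ 0)]
  have hLL' : ∀ (p q : EuclideanSpace ℝ (Fin 2)) (t e : ℝ), 0 < e → e ≤ 1 → ‖p - q‖ ≤ e →
      ‖u p t - u q t‖ ≤ M * (e * (1 - Real.log e)) := by
    intro p q t e h0 h1 hd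
    rcases eq_or_lt_of_le (norm_nonneg (p - q)) with h | h
    · have hpq : p = q := by
        rw [eq_comm, norm_eq_zero, sub_eq_zero] at h
        exact h
      rw [hpq, sub_self, norm_zero]
      exact mul_nonneg hM (LLflow.psi_pos h0 h1).le
    · have h2 := hu_LL p q t
      rw [hφ1 _ h (le_trans hd h1)] at h2
      calc ‖u p t - u q t‖ ≤ M * (‖p - q‖ * (1 - Real.log ‖p - q‖)) := h2
        _ ≤ M * (e * (1 - Real.log e)) :=
            mul_le_mul_of_nonneg_left (LLflow.psi_mono h hd h1) hM
  set A1 := max A 0 + 1 with hA1def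
  have hA1 : ∀ y t, ‖u y t‖ ≤ A1 := fun y t =>
    le_trans (hu_bdd y t) (by nlinarith [le_max_left A 0])
  have hA1ge : (1:ℝ) ≤ A1 := by nlinarith [le_max_right A 0]
  obtain ⟨X, hXs, hXd⟩ :=
    LLflow.exists_global_solution hu_cont A1 M hA1 hA1ge hM hLL' s x
  refine ⟨X, ⟨hXs, hXd⟩, ?_⟩
  intro Y hY
  exact LLflow.solution_unique M hM hLL' s hY.2 hXd (by rw [hY.1, hXs])
end

section
/- Let u be a bounded velocity field with |u(x,t)| ≤ A and |u(x,t) − u(y,t)| ≤ M φ(|x−y|) with φ(r) = r(1 − ln r) on (0,1]. Let X_t(x) solve dX_t/dt = u(X_t, t), X_0(x) = x. Then for |t| ≤ T and |x − y| small enough, |X_t(x) − X_t(y)| ≤ e |x − y|^{exp(−M|t|)}; in particular x ↦ X_t(x) is Hölder continuous with exponent exp(−M|t|). -/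
open Real Filter Set

/-- Barrier estimate on `[0, t]` with bumped constant `M' > M`. -/
lemma flow_barrier
    {φ : ℝ → ℝ} (hφ1 : ∀ r : ℝ, 0 < r → r ≤ 1 → φ r = r * (1 - Real.log r))
    {u : EuclideanSpace ℝ (Fin 2) → ℝ → EuclideanSpace ℝ (Fin 2)}
    {M : ℝ} (hM : 0 ≤ M)
    (hu_LL : ∀ x y t, ‖x - y‖ ≤ 1 → ‖u x t - u y t‖ ≤ M * φ ‖x - y‖)
    {X : EuclideanSpace ℝ (Fin 2) → ℝ → EuclideanSpace ℝ (Fin 2)}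
    (hX0 : ∀ x, X x 0 = x)
    (hX : ∀ x t, HasDerivAt (X x) (u (X x t) t) t)
    (T : ℝ) (hT : 0 < T) (t : ℝ) (ht0 : 0 ≤ t) (htT : t ≤ T)
    (x y : EuclideanSpace ℝ (Fin 2)) (ε M' : ℝ) (hε0 : 0 < ε)
    (hεδ : ε ≤ Real.exp (1 - Real.exp ((M + 1) * T)))
    (hxy : ‖x - y‖ ≤ ε) (hMM' : M < M') (hM'1 : M' ≤ M + 1) :
    ‖X x t - X y t‖ ≤ Real.exp (1 - (1 - Real.log ε) * Real.exp (-M' * t)) := by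
  set L : ℝ := 1 - Real.log ε with hL
  have hLbig : Real.exp ((M + 1) * T) ≤ L := by
    have h := Real.log_le_log hε0 hεδ
    rw [Real.log_exp] at h
    simp only [hL]; linarith
  have hL0 : 0 < L := lt_of_lt_of_le (Real.exp_pos _) hLbig
  set B : ℝ → ℝ := fun s => Real.exp (1 - L * Real.exp (-M' * s)) with hBdef
  set B' : ℝ → ℝ := fun s => B s * (L * (M' * Real.exp (-M' * s))) with hB'def
  have hBderiv : ∀ s, HasDerivAt B (B' s) s := by
    intro s
    have h1 : HasDerivAt (fun s : ℝ => -M' * s) (-M') s := by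
      simpa using (hasDerivAt_id s).const_mul (-M')
    have h3 := ((h1.exp.const_mul L).const_sub 1).exp
    convert h3 using 1
    simp only [hB'def, hBdef]
    ring
  have hBle1 : ∀ s ∈ Icc (0:ℝ) t, B s ≤ 1 := by
    intro s hs
    have hM'0 : 0 < M' := lt_of_le_of_lt hM hMM'
    have h1 : Real.exp (-(M' * T)) ≤ Real.exp (-M' * s) := by
      apply Real.exp_le_exp.2
      nlinarith [hs.1, hs.2, htT]
    have h2 : (1:ℝ) ≤ L * Real.exp (-M' * s) := by
      have h3 : Real.exp ((M+1) * T) * Real.exp (-(M' * T)) ≤ L * Real.exp (-M' * s) :=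
        mul_le_mul hLbig h1 (le_of_lt (Real.exp_pos _)) (le_of_lt hL0)
      rw [← Real.exp_add] at h3
      have h4 : (1:ℝ) ≤ Real.exp ((M+1) * T + -(M' * T)) :=
        Real.one_le_exp (by nlinarith)
      linarith
    calc B s ≤ Real.exp 0 := Real.exp_le_exp.2 (by linarith)
    _ = 1 := Real.exp_zero
  have key : ∀ ⦃s⦄, s ∈ Icc (0:ℝ) t → ‖X x s - X y s‖ ≤ B s := by
    apply image_norm_le_of_norm_deriv_right_lt_deriv_boundary
      (f := fun s => X x s - X y s) (f' := fun s => u (X x s) s - u (X y s) s)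
    · exact ContinuousOn.sub
        (fun s _ => ((hX x s).continuousAt).continuousWithinAt)
        (fun s _ => ((hX y s).continuousAt).continuousWithinAt)
    · intro s _
      exact ((hX x s).sub (hX y s)).hasDerivWithinAt
    · rw [hX0, hX0]
      have hB0 : B 0 = ε := by
        have he : (1 : ℝ) - L * Real.exp (-M' * 0) = Real.log ε := by
          simp only [hL, mul_zero, neg_zero, Real.exp_zero, mul_one]; ring
        simp only [hBdef]
        rw [he, Real.exp_log hε0]
      rw [hB0]; exact hxy
    · exact hBderiv
    · intro s hs hcontact
      have hsIcc : s ∈ Icc (0:ℝ) t := ⟨hs.1, le_of_lt hs.2⟩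
      have hB1 : B s ≤ 1 := hBle1 s hsIcc
      have hBpos : 0 < B s := Real.exp_pos _
      have hle1 : ‖X x s - X y s‖ ≤ 1 := by rw [hcontact]; exact hB1
      have h1 : ‖u (X x s) s - u (X y s) s‖ ≤ M * φ ‖X x s - X y s‖ :=
        hu_LL _ _ s hle1
      rw [hcontact, hφ1 (B s) hBpos hB1] at h1
      have hlogB : Real.log (B s) = 1 - L * Real.exp (-M' * s) := Real.log_exp _
      rw [hlogB] at h1
      have hpos : 0 < B s * (L * Real.exp (-M' * s)) :=
        mul_pos hBpos (mul_pos hL0 (Real.exp_pos _))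
      calc ‖u (X x s) s - u (X y s) s‖
          ≤ M * (B s * (1 - (1 - L * Real.exp (-M' * s)))) := h1
      _ = M * (B s * (L * Real.exp (-M' * s))) := by ring_nf
      _ < M' * (B s * (L * Real.exp (-M' * s))) := mul_lt_mul_of_pos_right hMM' hpos
      _ = B' s := by simp only [hB'def]; ring
  exact key ⟨ht0, le_refl t⟩

/-- Forward-in-time Hölder estimate. -/
lemma flow_forward
    {φ : ℝ → ℝ} (hφ1 : ∀ r : ℝ, 0 < r → r ≤ 1 → φ r = r * (1 - Real.log r))
    {u : EuclideanSpace ℝ (Fin 2) → ℝ → EuclideanSpace ℝ (Fin 2)}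
    {M : ℝ} (hM : 0 ≤ M)
    (hu_LL : ∀ x y t, ‖x - y‖ ≤ 1 → ‖u x t - u y t‖ ≤ M * φ ‖x - y‖)
    {X : EuclideanSpace ℝ (Fin 2) → ℝ → EuclideanSpace ℝ (Fin 2)}
    (hX0 : ∀ x, X x 0 = x)
    (hX : ∀ x t, HasDerivAt (X x) (u (X x t) t) t)
    (T : ℝ) (hT : 0 < T) (t : ℝ) (ht0 : 0 ≤ t) (htT : t ≤ T)
    (x y : EuclideanSpace ℝ (Fin 2))
    (hxy : ‖x - y‖ < Real.exp (1 - Real.exp ((M + 1) * T))) :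
    ‖X x t - X y t‖ ≤ Real.exp 1 * ‖x - y‖ ^ Real.exp (-M * t) := by
  rcases eq_or_ne x y with rfl | hne
  · -- x = y : distance is 0, by letting ε → 0⁺
    have h0 : ‖X x t - X x t‖ ≤ 0 := by
      have hev : ∀ᶠ ε in nhdsWithin (0:ℝ) (Ioi 0),
          ‖X x t - X x t‖ ≤ Real.exp (1 - (1 - Real.log ε) * Real.exp (-(M+1) * t)) := by
        have hmem : Ioc (0:ℝ) (Real.exp (1 - Real.exp ((M + 1) * T))) ∈
            nhdsWithin (0:ℝ) (Ioi 0) :=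
          Ioc_mem_nhdsGT_of_mem ⟨le_refl _, Real.exp_pos _⟩
        filter_upwards [hmem] with ε hε
        exact flow_barrier hφ1 hM hu_LL hX0 hX T hT t ht0 htT x x ε (M+1) hε.1 hε.2
          (by simp only [sub_self, norm_zero]; exact le_of_lt hε.1) (by linarith) (le_refl _)
      have htend : Tendsto (fun ε => Real.exp (1 - (1 - Real.log ε) * Real.exp (-(M+1) * t)))
          (nhdsWithin (0:ℝ) (Ioi 0)) (nhds 0) := by
        apply Real.tendsto_exp_atBot.comp
        have h1 : Tendsto (fun ε : ℝ => Real.log ε) (nhdsWithin (0:ℝ) (Ioi 0)) atBot :=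
          Real.tendsto_log_nhdsGT_zero
        have h2 : Tendsto (fun ε : ℝ => (1 - Real.log ε)) (nhdsWithin (0:ℝ) (Ioi 0)) atTop := by
          apply tendsto_atTop_add_const_left
          exact tendsto_neg_atBot_atTop.comp h1
        have h3 : Tendsto (fun ε : ℝ => (1 - Real.log ε) * Real.exp (-(M+1) * t))
            (nhdsWithin (0:ℝ) (Ioi 0)) atTop :=
          h2.atTop_mul_const (Real.exp_pos _)
        have h4 := tendsto_neg_atTop_atBot.comp h3
        apply tendsto_atBot_add_const_left
        exact h4
      exact ge_of_tendsto htend hev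
    have hz : ‖X x t - X x t‖ = 0 := le_antisymm h0 (norm_nonneg _)
    rw [hz]
    rw [sub_self, norm_zero, Real.zero_rpow (Real.exp_pos (-M * t)).ne']
    simp
  · -- x ≠ y : take ε = ‖x - y‖ and let M' → M⁺
    set ε : ℝ := ‖x - y‖ with hεdef
    have hε0 : 0 < ε := by
      rw [hεdef, norm_pos_iff]
      exact sub_ne_zero.2 hne
    have hlim : ‖X x t - X y t‖ ≤ Real.exp (1 - (1 - Real.log ε) * Real.exp (-M * t)) := by
      have hev : ∀ᶠ M' in nhdsWithin M (Ioi M),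
          ‖X x t - X y t‖ ≤ Real.exp (1 - (1 - Real.log ε) * Real.exp (-M' * t)) := by
        have hmem : Ioc M (M + 1) ∈ nhdsWithin M (Ioi M) :=
          Ioc_mem_nhdsGT_of_mem ⟨le_refl _, lt_add_one M⟩
        filter_upwards [hmem] with M' hM'
        exact flow_barrier hφ1 hM hu_LL hX0 hX T hT t ht0 htT x y ε M' hε0
          (le_of_lt hxy) (le_refl _) hM'.1 hM'.2
      have htend : Tendsto (fun M' => Real.exp (1 - (1 - Real.log ε) * Real.exp (-M' * t)))
          (nhdsWithin M (Ioi M))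
          (nhds (Real.exp (1 - (1 - Real.log ε) * Real.exp (-M * t)))) := by
        apply Tendsto.mono_left _ nhdsWithin_le_nhds
        apply Continuous.tendsto
        continuity
      exact ge_of_tendsto htend hev
    have ha0 : 0 < Real.exp (-M * t) := Real.exp_pos _
    have ha1 : Real.exp (-M * t) ≤ 1 := by
      rw [← Real.exp_zero]
      apply Real.exp_le_exp.2
      nlinarith
    set a : ℝ := Real.exp (-M * t) with hadef
    calc ‖X x t - X y t‖ ≤ Real.exp (1 - (1 - Real.log ε) * a) := hlim
    _ = Real.exp (1 - a) * Real.exp (Real.log ε * a) := by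
        rw [← Real.exp_add]; ring_nf
    _ ≤ Real.exp 1 * Real.exp (Real.log ε * a) := by
        apply mul_le_mul_of_nonneg_right _ (le_of_lt (Real.exp_pos _))
        exact Real.exp_le_exp.2 (by linarith)
    _ = Real.exp 1 * ε ^ a := by rw [Real.rpow_def_of_pos hε0]

theorem flow_holder_continuity
    (φ : ℝ → ℝ) (hφ1 : ∀ r : ℝ, 0 < r → r ≤ 1 → φ r = r * (1 - Real.log r))
    (u : EuclideanSpace ℝ (Fin 2) → ℝ → EuclideanSpace ℝ (Fin 2))
    (A : ℝ) (hu_bdd : ∀ x t, ‖u x t‖ ≤ A)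
    (M : ℝ) (hM : 0 ≤ M)
    (hu_LL : ∀ x y t, ‖x - y‖ ≤ 1 → ‖u x t - u y t‖ ≤ M * φ ‖x - y‖)
    (X : EuclideanSpace ℝ (Fin 2) → ℝ → EuclideanSpace ℝ (Fin 2))
    (hX0 : ∀ x, X x 0 = x)
    (hX : ∀ x t, HasDerivAt (X x) (u (X x t) t) t) :
    ∀ T : ℝ, 0 < T → ∃ δ : ℝ, 0 < δ ∧
      ∀ (t : ℝ), |t| ≤ T → ∀ x y, ‖x - y‖ < δ →
        ‖X x t - X y t‖ ≤ Real.exp 1 * ‖x - y‖ ^ Real.exp (-M * |t|) := by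
  intro T hT
  refine ⟨Real.exp (1 - Real.exp ((M + 1) * T)), Real.exp_pos _, ?_⟩
  intro t ht x y hxy
  rcases le_or_gt 0 t with ht0 | ht0
  · rw [abs_of_nonneg ht0]
    exact flow_forward hφ1 hM hu_LL hX0 hX T hT t ht0
      (by rwa [abs_of_nonneg ht0] at ht) x y hxy
  · -- time reversal
    set v : EuclideanSpace ℝ (Fin 2) → ℝ → EuclideanSpace ℝ (Fin 2) :=
      fun z s => -u z (-s) with hvdef
    set Y : EuclideanSpace ℝ (Fin 2) → ℝ → EuclideanSpace ℝ (Fin 2) :=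
      fun z s => X z (-s) with hYdef
    have hv_LL : ∀ a b s, ‖a - b‖ ≤ 1 → ‖v a s - v b s‖ ≤ M * φ ‖a - b‖ := by
      intro a b s hab
      have h := hu_LL b a (-s) (by rwa [norm_sub_rev])
      rw [norm_sub_rev b a] at h
      calc ‖v a s - v b s‖ = ‖u b (-s) - u a (-s)‖ := by
            simp only [hvdef, neg_sub_neg]
      _ ≤ M * φ ‖a - b‖ := h
    have hY0 : ∀ z, Y z 0 = z := by
      intro z; simp only [hYdef, neg_zero]; exact hX0 z
    have hYderiv : ∀ z s, HasDerivAt (Y z) (v (Y z s) s) s := by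
      intro z s
      have h := (hX z (-s)).scomp s (hasDerivAt_neg s)
      simpa [hYdef, hvdef, Function.comp_def] using h
    have ht0' : 0 ≤ -t := by linarith
    have htT' : -t ≤ T := by
      rw [abs_of_neg ht0] at ht; exact ht
    have h := flow_forward hφ1 hM hv_LL hY0 hYderiv T hT (-t) ht0' htT' x y hxy
    rw [abs_of_neg ht0]
    simpa only [hYdef, neg_neg] using h
end

section
/- Under the same hypotheses, the map t ↦ ω(·, t) = ω₀ ∘ X_t^{-1} is continuous from ℝ to L^∞(Ω) equipped with the weak-* topology, i.e., for every f ∈ L¹(Ω), t ↦ ∫_Ω ω(x,t) f(x) dx is continuous. -/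
open MeasureTheory
open scoped ENNReal Topology

theorem transported_vorticity_weakstar_continuous
    (Ω : Set (EuclideanSpace ℝ (Fin 2))) (hΩ : Bornology.IsBounded Ω)
    (hΩmeas : MeasurableSet Ω)
    (ω₀ : EuclideanSpace ℝ (Fin 2) → ℝ)
    (hω₀ : MemLp ω₀ ⊤ (volume.restrict Ω))
    (X Xinv : ℝ → EuclideanSpace ℝ (Fin 2) → EuclideanSpace ℝ (Fin 2))
    (hXcont : ContinuousOn (fun q : EuclideanSpace ℝ (Fin 2) × ℝ => X q.2 q.1)
      (closure Ω ×ˢ Set.univ))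
    (hXmp : ∀ t : ℝ, MeasurePreserving (X t) (volume.restrict Ω) (volume.restrict Ω))
    (hXbij : ∀ t : ℝ, Set.BijOn (X t) Ω Ω)
    (hXinv : ∀ t : ℝ, ∀ x ∈ Ω, Xinv t (X t x) = x ∧ X t (Xinv t x) = x)
    (hX0 : ∀ x ∈ Ω, X 0 x = x) :
    ∀ f : EuclideanSpace ℝ (Fin 2) → ℝ, Integrable f (volume.restrict Ω) →
      Continuous (fun t : ℝ => ∫ x in Ω, ω₀ (Xinv t x) * f x) := by
  intro f hf
  set μ := volume.restrict Ω with hμdef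
  haveI : IsFiniteMeasure μ := ⟨by
    rw [hμdef, Measure.restrict_apply_univ]; exact hΩ.measure_lt_top⟩
  have hT : ∀ t : ℝ, Measurable (X t) := fun t => (hXmp t).measurable
  -- Xinv maps Ω to Ω
  have hXinvmem : ∀ t : ℝ, ∀ y ∈ Ω, Xinv t y ∈ Ω := by
    intro t y hy
    obtain ⟨z, hz, hzy⟩ := (hXbij t).surjOn hy
    have : Xinv t y = z := by rw [← hzy]; exact (hXinv t z hz).1
    rw [this]; exact hz
  -- measurable embedding of Ω under X t
  haveI hSB : StandardBorelSpace Ω := hΩmeas.standardBorel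
  have hemb : ∀ t : ℝ,
      MeasurableEmbedding (fun x : Ω => X t (x : EuclideanSpace ℝ (Fin 2))) := by
    intro t
    refine ((hT t).comp measurable_subtype_coe).measurableEmbedding ?_
    intro a b hab
    exact Subtype.ext ((hXbij t).injOn a.2 b.2 hab)
  -- a.e. bound on ω₀
  set C : ℝ := (eLpNorm ω₀ ⊤ μ).toReal with hCdef
  have hC0 : 0 ≤ C := ENNReal.toReal_nonneg
  have hCbound : ∀ᵐ x ∂μ, ‖ω₀ x‖ ≤ C := by
    have h1 : ∀ᵐ x ∂μ, (‖ω₀ x‖₊ : ℝ≥0∞) ≤ eLpNormEssSup ω₀ μ := ae_le_eLpNormEssSup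
    have htop : eLpNormEssSup ω₀ μ ≠ ⊤ := by
      rw [← eLpNorm_exponent_top]; exact hω₀.2.ne
    filter_upwards [h1] with x hx
    have := ENNReal.toReal_mono htop hx
    simpa [hCdef, eLpNorm_exponent_top] using this
  -- change of variables (easy direction)
  have cov : ∀ (t : ℝ) (h : EuclideanSpace ℝ (Fin 2) → ℝ), AEStronglyMeasurable h μ →
      ∫ x, h (X t x) ∂μ = ∫ y, h y ∂μ := by
    intro t h hh
    conv_rhs => rw [← (hXmp t).map_eq]
    rw [integral_map (hT t).aemeasurable (by rwa [(hXmp t).map_eq])]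
  -- ω₀ ∘ Xinv t is a.e. strongly measurable
  have haesm : ∀ t : ℝ, AEStronglyMeasurable (fun y => ω₀ (Xinv t y)) μ := by
    intro t
    obtain ⟨ω₀', hm, hae⟩ := hω₀.1
    set e : Ω → EuclideanSpace ℝ (Fin 2) := fun x => X t (x : EuclideanSpace ℝ (Fin 2))
      with hedef
    have hinj : Function.Injective e := (hemb t).injective
    set h : EuclideanSpace ℝ (Fin 2) → ℝ :=
      Function.extend e (fun x : Ω => ω₀' (x : EuclideanSpace ℝ (Fin 2))) 0 with hhdef
    have hmeas : Measurable h :=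
      (hemb t).measurable_extend (hm.measurable.comp measurable_subtype_coe) measurable_const
    refine ⟨h, hmeas.stronglyMeasurable, ?_⟩
    set N : Set (EuclideanSpace ℝ (Fin 2)) := {x | ω₀ x ≠ ω₀' x} with hNdef
    have hNnull : μ N = 0 := hae
    set B := toMeasurable μ N with hBdef
    have hBnull : μ B = 0 := by rw [hBdef, measure_toMeasurable]; exact hNnull
    have hBmeas : MeasurableSet B := measurableSet_toMeasurable μ N
    have hNB : N ⊆ B := subset_toMeasurable μ N
    set S : Set Ω := Subtype.val ⁻¹' B with hSdef
    have hSmeas : MeasurableSet S := measurable_subtype_coe hBmeas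
    set A := e '' S with hAdef
    have hAmeas : MeasurableSet A := (hemb t).measurableSet_image' hSmeas
    have hAnull : μ A = 0 := by
      have hpre : μ (X t ⁻¹' A) = μ A := (hXmp t).measure_preimage hAmeas.nullMeasurableSet
      have hsub : X t ⁻¹' A ∩ Ω ⊆ B ∩ Ω := by
        rintro x ⟨hxA, hxΩ⟩
        obtain ⟨s, hsS, hse⟩ := hxA
        have : (s : EuclideanSpace ℝ (Fin 2)) = x := (hXbij t).injOn s.2 hxΩ hse
        exact ⟨this ▸ hsS, hxΩ⟩
      have : μ (X t ⁻¹' A) = 0 := by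
        rw [hμdef, Measure.restrict_apply ((hT t) hAmeas)]
        refine le_antisymm (le_trans (measure_mono hsub) ?_) zero_le
        have : volume (B ∩ Ω) = 0 := by
          rw [hμdef, Measure.restrict_apply hBmeas] at hBnull; exact hBnull
        rw [this]
      rw [← hpre, this]
    have hΩae : ∀ᵐ y ∂μ, y ∈ Ω := ae_restrict_mem hΩmeas
    have hAae : ∀ᵐ y ∂μ, y ∉ A := by
      rw [ae_iff]; simpa using hAnull
    filter_upwards [hΩae, hAae] with y hyΩ hyA
    have hz : Xinv t y ∈ Ω := hXinvmem t y hyΩ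
    have hey : e ⟨Xinv t y, hz⟩ = y := (hXinv t y hyΩ).2
    have h1 : h y = ω₀' (Xinv t y) := by
      have h0 := hinj.extend_apply (fun x : Ω => ω₀' (x : EuclideanSpace ℝ (Fin 2))) 0
        ⟨Xinv t y, hz⟩
      rw [hey] at h0
      exact h0
    have h2 : ω₀ (Xinv t y) = ω₀' (Xinv t y) := by
      by_contra hne
      have : Xinv t y ∈ N := hne
      exact hyA ⟨⟨Xinv t y, hz⟩, hNB this, hey⟩
    rw [h1, h2]
  -- integrability of compositions
  have hint_comp : ∀ (t : ℝ) (g : EuclideanSpace ℝ (Fin 2) → ℝ), Integrable g μ →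
      Integrable (fun x => g (X t x)) μ := by
    intro t g hg
    have := (integrable_map_measure (by rw [(hXmp t).map_eq]; exact hg.1)
      (hT t).aemeasurable).mp (by rwa [(hXmp t).map_eq])
    exact this
  have hint_fT : ∀ t : ℝ, Integrable (fun x => f (X t x)) μ := fun t => hint_comp t f hf
  -- the key identity
  have hkey : ∀ t : ℝ, (∫ x in Ω, ω₀ (Xinv t x) * f x) = ∫ x, ω₀ x * f (X t x) ∂μ := by
    intro t
    have h1 : AEStronglyMeasurable (fun y => ω₀ (Xinv t y) * f y) μ := (haesm t).mul hf.1
    have step1 : (∫ y, ω₀ (Xinv t y) * f y ∂μ)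
        = ∫ x, ω₀ (Xinv t (X t x)) * f (X t x) ∂μ := by
      conv_lhs => rw [← (hXmp t).map_eq]
      rw [integral_map (hT t).aemeasurable (by rwa [(hXmp t).map_eq])]
    have step2 : (∫ x, ω₀ (Xinv t (X t x)) * f (X t x) ∂μ)
        = ∫ x, ω₀ x * f (X t x) ∂μ := by
      refine integral_congr_ae ?_
      filter_upwards [ae_restrict_mem hΩmeas] with x hx
      rw [(hXinv t x hx).1]
    exact step1.trans step2
  -- continuity for continuous compactly supported g
  have cont_G : ∀ g : EuclideanSpace ℝ (Fin 2) → ℝ, Continuous g → HasCompactSupport g →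
      Continuous (fun t : ℝ => ∫ x, ω₀ x * g (X t x) ∂μ) := by
    intro g hg hgsupp
    obtain ⟨M, hM⟩ : ∃ M : ℝ, ∀ y, ‖g y‖ ≤ M := hgsupp.exists_bound_of_continuous hg
    refine continuous_of_dominated (bound := fun _ => C * M) ?_ ?_ ?_ ?_
    · intro t
      exact hω₀.1.mul ((hg.measurable.comp (hT t)).stronglyMeasurable.aestronglyMeasurable)
    · intro t
      filter_upwards [hCbound] with x hx
      rw [norm_mul]
      exact mul_le_mul hx (hM _) (norm_nonneg _) hC0
    · exact integrable_const _
    · filter_upwards [ae_restrict_mem hΩmeas] with x hx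
      have hXx : Continuous fun t : ℝ => X t x := by
        rw [← continuousOn_univ]
        have hmap : Set.MapsTo (fun t : ℝ => ((x, t) : EuclideanSpace ℝ (Fin 2) × ℝ))
            Set.univ (closure Ω ×ˢ Set.univ) := by
          intro t _; exact ⟨subset_closure hx, trivial⟩
        exact hXcont.comp ((Continuous.prodMk_right x).continuousOn) hmap
      exact continuous_const.mul (hg.comp hXx)
  -- approximation bound
  have hdiff : ∀ (t : ℝ) (g : EuclideanSpace ℝ (Fin 2) → ℝ), Continuous g →
      Integrable g μ →
      |(∫ x, ω₀ x * f (X t x) ∂μ) - ∫ x, ω₀ x * g (X t x) ∂μ|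
        ≤ C * ∫ x, ‖f x - g x‖ ∂μ := by
    intro t g hg hgint
    have hgT : Integrable (fun x => g (X t x)) μ := hint_comp t g hgint
    have h1 : Integrable (fun x => ω₀ x * f (X t x)) μ :=
      (hint_fT t).bdd_mul hω₀.1 hCbound
    have h2 : Integrable (fun x => ω₀ x * g (X t x)) μ :=
      hgT.bdd_mul hω₀.1 hCbound
    rw [← integral_sub h1 h2]
    have heq : ∀ x, ω₀ x * f (X t x) - ω₀ x * g (X t x)
        = ω₀ x * (f (X t x) - g (X t x)) := by intro x; ring
    simp_rw [heq]
    have h12 : Integrable (fun x => ω₀ x * (f (X t x) - g (X t x))) μ := by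
      refine (h1.sub h2).congr ?_
      filter_upwards with x
      simp only [Pi.sub_apply]; ring
    have h34 : Integrable (fun x => C * ‖f (X t x) - g (X t x)‖) μ := by
      refine (((hint_fT t).sub hgT).norm.const_mul C).congr ?_
      filter_upwards with x
      simp only [Pi.sub_apply]
    have hnormle : |∫ x, ω₀ x * (f (X t x) - g (X t x)) ∂μ|
        ≤ ∫ x, ‖ω₀ x * (f (X t x) - g (X t x))‖ ∂μ := by
      rw [← Real.norm_eq_abs]
      exact norm_integral_le_integral_norm _
    refine hnormle.trans ?_
    have hmono : (∫ x, ‖ω₀ x * (f (X t x) - g (X t x))‖ ∂μ)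
        ≤ ∫ x, C * ‖f (X t x) - g (X t x)‖ ∂μ := by
      refine integral_mono_ae h12.norm h34 ?_
      filter_upwards [hCbound] with x hx
      rw [norm_mul]
      exact mul_le_mul_of_nonneg_right hx (norm_nonneg _)
    refine hmono.trans ?_
    rw [integral_const_mul]
    have hcov : (∫ x, ‖f (X t x) - g (X t x)‖ ∂μ) = ∫ x, ‖f x - g x‖ ∂μ :=
      cov t (fun y => ‖f y - g y‖) (hf.1.sub hg.aestronglyMeasurable).norm
    rw [hcov]
  -- approximation sequence
  have happrox : ∀ n : ℕ, ∃ g : EuclideanSpace ℝ (Fin 2) → ℝ, Continuous g ∧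
      HasCompactSupport g ∧ Integrable g μ ∧
      C * ∫ x, ‖f x - g x‖ ∂μ ≤ ((n : ℝ) + 1)⁻¹ := by
    intro n
    have hf₀ : Integrable (Ω.indicator f) volume := by
      rw [integrable_indicator_iff hΩmeas]; exact hf
    have hε' : (0 : ℝ) < ((n : ℝ) + 1)⁻¹ / (C + 1) := by positivity
    obtain ⟨g, hgsupp, hgint_le, hgcont, hgint⟩ :=
      hf₀.exists_hasCompactSupport_integral_sub_le hε'
    refine ⟨g, hgcont, hgsupp, hgint.restrict, ?_⟩
    have hkey2 : (∫ x, ‖f x - g x‖ ∂μ) ≤ ∫ x, ‖Ω.indicator f x - g x‖ ∂volume := by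
      have e1 : (∫ x, ‖f x - g x‖ ∂μ) = ∫ x in Ω, ‖Ω.indicator f x - g x‖ ∂volume := by
        refine integral_congr_ae ?_
        filter_upwards [ae_restrict_mem hΩmeas] with x hx
        rw [Set.indicator_of_mem hx]
      rw [e1]
      refine setIntegral_le_integral (hf₀.sub hgint).norm ?_
      refine Filter.Eventually.of_forall fun x => ?_
      simp only [Pi.zero_apply, Pi.sub_apply]
      positivity
    calc C * ∫ x, ‖f x - g x‖ ∂μ
        ≤ C * (((n : ℝ) + 1)⁻¹ / (C + 1)) := by
          refine mul_le_mul_of_nonneg_left (hkey2.trans hgint_le) hC0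
      _ ≤ (C + 1) * (((n : ℝ) + 1)⁻¹ / (C + 1)) := by
          refine mul_le_mul_of_nonneg_right (by linarith) (le_of_lt hε')
      _ = ((n : ℝ) + 1)⁻¹ := by field_simp
  choose gs hgs_cont hgs_supp hgs_int hgs_le using happrox
  -- conclude by uniform convergence
  have hrw : (fun t : ℝ => ∫ x in Ω, ω₀ (Xinv t x) * f x)
      = fun t : ℝ => ∫ x, ω₀ x * f (X t x) ∂μ := funext hkey
  rw [hrw]
  have hunif : TendstoUniformly (fun n (t : ℝ) => ∫ x, ω₀ x * gs n (X t x) ∂μ)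
      (fun t : ℝ => ∫ x, ω₀ x * f (X t x) ∂μ) Filter.atTop := by
    rw [Metric.tendstoUniformly_iff]
    intro ε hε
    have htend : Filter.Tendsto (fun n : ℕ => ((n : ℝ) + 1)⁻¹) Filter.atTop (𝓝 0) := by
      simpa [one_div] using tendsto_one_div_add_atTop_nhds_zero_nat (𝕜 := ℝ)
    have : ∀ᶠ n : ℕ in Filter.atTop, ((n : ℝ) + 1)⁻¹ < ε := by
      have := htend.eventually (eventually_lt_nhds hε)  -- ?
      simpa using this
    filter_upwards [this] with n hn t
    rw [Real.dist_eq]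
    exact lt_of_le_of_lt ((hdiff t (gs n) (hgs_cont n) (hgs_int n)).trans (hgs_le n)) hn
  exact hunif.continuous (Filter.Eventually.of_forall fun n =>
    cont_G (gs n) (hgs_cont n) (hgs_supp n)).frequently
end

section
/- Let Ω ⊂ ℝ² be bounded, ω ∈ L^∞(Ω × (t₁,t₂)) with ω(x,t) = ω₀(X_{t,0}(x)) for a flow X of a bounded divergence-free Log-Lipschitz field u, where X_t is measure-preserving. Then for every φ ∈ C¹(Ω̄ × [t₁,t₂]): ∫_{t₁}^{t₂} ∫_Ω ω (∂_t φ + u·∇φ) dx dt = ∫_Ω ω(·,t₂) φ(·,t₂) − ω(·,t₁) φ(·,t₁) dx. -/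
open MeasureTheory Set Filter Metric Topology
open scoped ENNReal NNReal

section aux
variable {E : Type*} [NormedAddCommGroup E] [NormedSpace ℝ E]

private lemma u_cont_aux' (mod : ℝ → ℝ)
    (hmod1 : ∀ r : ℝ, 0 < r → r ≤ 1 → mod r = r * (1 - Real.log r))
    (u : E → ℝ → E) (M : ℝ)
    (hu_LL : ∀ x y t, ‖u x t - u y t‖ ≤ M * mod ‖x - y‖) (t : ℝ) :
    Continuous fun x => u x t := by
  rw [Metric.continuous_iff]
  intro x₀ ε hε
  have h1 : Tendsto (fun r : ℝ => Real.log r * r) (𝓝[>] 0) (𝓝 0) := by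
    simpa using tendsto_log_mul_rpow_nhdsGT_zero one_pos
  have h2 : Tendsto (fun r : ℝ => r) (𝓝[>] 0) (𝓝 0) :=
    tendsto_id.mono_left nhdsWithin_le_nhds
  have h3 : Tendsto (fun r : ℝ => |M| * (r - Real.log r * r)) (𝓝[>] 0) (𝓝 0) := by
    have := (h2.sub h1).const_mul |M|
    simpa using this
  rw [Metric.tendsto_nhdsWithin_nhds] at h3
  obtain ⟨δ, hδ, hδ'⟩ := h3 ε hε
  refine ⟨min δ 1, lt_min hδ one_pos, fun x hx => ?_⟩
  rcases eq_or_ne x x₀ with rfl | hne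
  · simpa using hε
  · set r := ‖x - x₀‖ with hr
    have hr0 : 0 < r := by simpa [hr] using sub_ne_zero.2 hne
    have hrδ : r < δ := by
      have : dist x x₀ < δ := lt_of_lt_of_le hx (min_le_left _ _)
      simpa [dist_eq_norm, hr] using this
    have hr1 : r ≤ 1 := by
      have : dist x x₀ < 1 := lt_of_lt_of_le hx (min_le_right _ _)
      simpa [dist_eq_norm, hr] using this.le
    have hmodr : mod r = r * (1 - Real.log r) := hmod1 r hr0 hr1
    have hmodnn : 0 ≤ mod r := by
      rw [hmodr]
      have : Real.log r ≤ 0 := Real.log_nonpos hr0.le hr1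
      nlinarith
    have hle : dist (u x t) (u x₀ t) ≤ M * mod r := by
      rw [dist_eq_norm]; exact hu_LL x x₀ t
    have hle2 : M * mod r ≤ |M| * (r - Real.log r * r) := by
      have h4 : M * mod r ≤ |M| * mod r :=
        mul_le_mul_of_nonneg_right (le_abs_self M) hmodnn
      refine h4.trans (le_of_eq ?_)
      rw [hmodr]; ring
    have hlt : |M| * (r - Real.log r * r) < ε := by
      have h5 := hδ' (x := r) hr0 (by simpa [Real.dist_eq, abs_of_pos hr0] using hrδ)
      have hnn : 0 ≤ |M| * (r - Real.log r * r) := by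
        calc (0:ℝ) ≤ |M| * mod r := mul_nonneg (abs_nonneg M) hmodnn
          _ = |M| * (r - Real.log r * r) := by rw [hmodr]; ring
      rwa [Real.dist_eq, sub_zero, abs_of_nonneg hnn] at h5
    linarith

private lemma partial_snd_aux (Φ : E × ℝ → ℝ) (hΦ : ContDiff ℝ 1 Φ) (a : E) (b : ℝ) :
    HasDerivAt (fun τ => Φ (a, τ)) (fderiv ℝ Φ (a, b) (0, 1)) b :=
  ((hΦ.differentiable one_ne_zero (a, b)).hasFDerivAt).comp_hasDerivAt b
    ((hasDerivAt_const b a).prodMk (hasDerivAt_id b))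

private lemma partial_fst_aux (Φ : E × ℝ → ℝ) (hΦ : ContDiff ℝ 1 Φ) (a : E) (b : ℝ) (v : E) :
    fderiv ℝ (fun y => Φ (y, b)) a v = fderiv ℝ Φ (a, b) (v, 0) := by
  have H : HasFDerivAt (fun y => Φ (y, b))
      ((fderiv ℝ Φ (a, b)).comp ((ContinuousLinearMap.id ℝ E).prod 0)) a :=
    ((hΦ.differentiable one_ne_zero (a, b)).hasFDerivAt).comp a
      ((hasFDerivAt_id a).prodMk (hasFDerivAt_const b a))
  rw [H.fderiv]
  simp

private lemma chain_aux (Φ : E × ℝ → ℝ) (hΦ : ContDiff ℝ 1 Φ) (γ : ℝ → E) (w : E) (t : ℝ)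
    (hγ : HasDerivAt γ w t) :
    HasDerivAt (fun s => Φ (γ s, s)) (fderiv ℝ Φ (γ t, t) (w, 1)) t := by
  have hf : HasDerivAt (fun s : ℝ => (γ s, s)) ((w, 1) : E × ℝ) t :=
    hγ.prodMk (hasDerivAt_id t)
  exact HasFDerivAt.comp_hasDerivAt t
    ((hΦ.differentiable one_ne_zero (γ t, t)).hasFDerivAt) hf

private lemma decomp_aux (Φ : E × ℝ → ℝ) (hΦ : ContDiff ℝ 1 Φ) (a : E) (t : ℝ) (w : E) :
    deriv (fun τ => Φ (a, τ)) t + fderiv ℝ (fun y => Φ (y, t)) a w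
      = fderiv ℝ Φ (a, t) (w, 1) := by
  rw [(partial_snd_aux Φ hΦ a t).deriv, partial_fst_aux Φ hΦ a t w,
    ← ContinuousLinearMap.map_add]
  congr 1
  simp [Prod.ext_iff]

end aux

theorem lagrangian_solution_is_weak_solution
    (Ω : Set (EuclideanSpace ℝ (Fin 2))) (hΩ : Bornology.IsBounded Ω)
    (hΩmeas : MeasurableSet Ω)
    (mod : ℝ → ℝ) (hmod1 : ∀ r : ℝ, 0 < r → r ≤ 1 → mod r = r * (1 - Real.log r))
    (hmod2 : ∀ r : ℝ, 1 < r → mod r = 1)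
    (u : EuclideanSpace ℝ (Fin 2) → ℝ → EuclideanSpace ℝ (Fin 2))
    (A : ℝ) (hu_bdd : ∀ x t, ‖u x t‖ ≤ A)
    (M : ℝ) (hu_LL : ∀ x y t, ‖u x t - u y t‖ ≤ M * mod ‖x - y‖)
    (X Xinv : ℝ → EuclideanSpace ℝ (Fin 2) → EuclideanSpace ℝ (Fin 2))
    (hX0 : ∀ x, X 0 x = x)
    (hXode : ∀ x t, HasDerivAt (fun s => X s x) (u (X t x) t) t)
    (hXmp : ∀ t : ℝ, MeasurePreserving (X t) (volume.restrict Ω) (volume.restrict Ω))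
    (hXbij : ∀ t : ℝ, Set.BijOn (X t) Ω Ω)
    (hXinv : ∀ t : ℝ, ∀ x ∈ Ω, Xinv t (X t x) = x ∧ X t (Xinv t x) = x)
    (ω₀ : EuclideanSpace ℝ (Fin 2) → ℝ)
    (hω₀ : MemLp ω₀ ⊤ (volume.restrict Ω))
    (t₁ t₂ : ℝ) (ht : t₁ ≤ t₂)
    (φ : EuclideanSpace ℝ (Fin 2) → ℝ → ℝ)
    (hφ : ContDiff ℝ 1 (fun p : EuclideanSpace ℝ (Fin 2) × ℝ => φ p.1 p.2)) :
    ∫ t in t₁..t₂, ∫ x in Ω,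
        ω₀ (Xinv t x) * (deriv (φ x) t + fderiv ℝ (fun y => φ y t) x (u x t)) =
      ∫ x in Ω, (ω₀ (Xinv t₂ x) * φ x t₂ - ω₀ (Xinv t₁ x) * φ x t₁) := by
  classical
  set Φ : EuclideanSpace ℝ (Fin 2) × ℝ → ℝ := fun p => φ p.1 p.2 with hΦdef
  haveI hfinmeas : IsFiniteMeasure (volume.restrict Ω) :=
    ⟨by rw [Measure.restrict_apply_univ]; exact hΩ.measure_lt_top⟩
  have hu_cont : ∀ t : ℝ, Continuous fun x => u x t :=
    u_cont_aux' mod hmod1 u M hu_LL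
  have measX : ∀ t : ℝ, Measurable (X t) := fun t => (hXmp t).measurable
  have hcfd : Continuous (fderiv ℝ Φ) := hφ.continuous_fderiv one_ne_zero
  have hclos : IsCompact (closure Ω) := hΩ.isCompact_closure
  -- essential bound for the vorticity
  set ω' : EuclideanSpace ℝ (Fin 2) → ℝ := hω₀.1.mk ω₀ with hω'def
  have hω'meas : StronglyMeasurable ω' := hω₀.1.stronglyMeasurable_mk
  have hae : ω₀ =ᵐ[volume.restrict Ω] ω' := hω₀.1.ae_eq_mk
  set C : ℝ := (eLpNormEssSup ω₀ (volume.restrict Ω)).toReal with hCdef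
  have hC0 : (0:ℝ) ≤ C := ENNReal.toReal_nonneg
  have hC' : ∀ᵐ a ∂(volume.restrict Ω), ‖ω' a‖ ≤ C := by
    have hfin : eLpNormEssSup ω₀ (volume.restrict Ω) ≠ ⊤ := by
      have h1 := hω₀.2
      rw [eLpNorm_exponent_top] at h1
      exact h1.ne
    filter_upwards [ae_le_eLpNormEssSup (f := ω₀) (μ := volume.restrict Ω), hae]
      with a ha hae'
    rw [← hae']
    calc ‖ω₀ a‖ = ((‖ω₀ a‖₊ : ℝ≥0∞)).toReal := by simp
      _ ≤ (eLpNormEssSup ω₀ (volume.restrict Ω)).toReal := ENNReal.toReal_mono hfin ha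
  -- uniform bounds on compact sets
  have hbounds : ∀ s : Set (EuclideanSpace ℝ (Fin 2) × ℝ), IsCompact s →
      ∃ κ : ℝ, 0 ≤ κ ∧ ∀ p ∈ s, ‖fderiv ℝ Φ p‖ ≤ κ ∧ |Φ p| ≤ κ := by
    intro s hs
    obtain ⟨κa, hκa⟩ := hs.exists_bound_of_continuousOn hcfd.continuousOn
    obtain ⟨κb, hκb⟩ := hs.exists_bound_of_continuousOn hφ.continuous.continuousOn
    refine ⟨max (max κa κb) 0, le_max_right _ _, fun p hp => ⟨?_, ?_⟩⟩
    · exact (hκa p hp).trans (le_max_of_le_left (le_max_left _ _))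
    · have := hκb p hp
      rw [Real.norm_eq_abs] at this
      exact this.trans (le_max_of_le_left (le_max_right _ _))
  -- measurable realization of ω₀ ∘ Xinv t, via the Lusin–Souslin theorem
  have hv : ∀ t : ℝ, ∃ v : EuclideanSpace ℝ (Fin 2) → ℝ, Measurable v ∧
      (∀ y ∈ Ω, v (X t y) = ω' y) ∧
      (fun x => ω₀ (Xinv t x)) =ᵐ[volume.restrict Ω] v := by
    intro t
    haveI : StandardBorelSpace ↥Ω := hΩmeas.standardBorel
    set S : ↥Ω → EuclideanSpace ℝ (Fin 2) :=
      fun y => X t (y : EuclideanSpace ℝ (Fin 2)) with hS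
    have hSmeas : Measurable S := (measX t).comp measurable_subtype_coe
    have hSinj : Function.Injective S := by
      intro a b hab
      exact Subtype.ext ((hXbij t).injOn a.2 b.2 hab)
    have hSemb : MeasurableEmbedding S := hSmeas.measurableEmbedding hSinj
    obtain ⟨v, hvmeas, hvcomp⟩ := hSemb.exists_measurable_extend
        (hω'meas.measurable.comp measurable_subtype_coe) (fun _ => ⟨0⟩)
    have hvX : ∀ y ∈ Ω, v (X t y) = ω' y := fun y hy => congrFun hvcomp ⟨y, hy⟩
    refine ⟨v, hvmeas, hvX, ?_⟩
    obtain ⟨N, hNsub, hNmeas, hNnull⟩ :=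
      exists_measurable_superset_of_null (ae_iff.mp hae)
    set B : Set (EuclideanSpace ℝ (Fin 2)) := X t '' (N ∩ Ω) with hB
    have hBeq : B = S '' (Subtype.val ⁻¹' N) := by
      ext x
      constructor
      · rintro ⟨y, ⟨hyN, hyΩ⟩, rfl⟩; exact ⟨⟨y, hyΩ⟩, hyN, rfl⟩
      · rintro ⟨⟨y, hyΩ⟩, hyN, rfl⟩; exact ⟨y, ⟨hyN, hyΩ⟩, rfl⟩
    have hBmeas : MeasurableSet B := by
      rw [hBeq]
      exact hSemb.measurableSet_image' (measurable_subtype_coe hNmeas)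
    have hpre : X t ⁻¹' B ∩ Ω = N ∩ Ω := by
      ext y
      constructor
      · rintro ⟨hyB, hyΩ⟩
        obtain ⟨z, ⟨hzN, hzΩ⟩, hz⟩ := hyB
        have hzy : z = y := (hXbij t).injOn hzΩ hyΩ hz
        exact ⟨hzy ▸ hzN, hyΩ⟩
      · rintro ⟨hyN, hyΩ⟩
        exact ⟨⟨y, ⟨hyN, hyΩ⟩, rfl⟩, hyΩ⟩
    have hBnull : volume.restrict Ω B = 0 := by
      have h1 : volume.restrict Ω (X t ⁻¹' B) = volume.restrict Ω B :=
        (hXmp t).measure_preimage hBmeas.nullMeasurableSet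
      rw [← h1, Measure.restrict_apply (measX t hBmeas), hpre,
        ← Measure.restrict_apply hNmeas, hNnull]
    have hXinvΩ : ∀ x ∈ Ω, Xinv t x ∈ Ω ∧ X t (Xinv t x) = x := by
      intro x hx
      obtain ⟨z, hz, hzx⟩ := (hXbij t).surjOn hx
      have hzz : Xinv t x = z := by rw [← hzx]; exact (hXinv t z hz).1
      exact ⟨hzz ▸ hz, (hXinv t x hx).2⟩
    have hBae : ∀ᵐ x ∂(volume.restrict Ω), x ∉ B :=
      measure_eq_zero_iff_ae_notMem.mp hBnull
    filter_upwards [ae_restrict_mem hΩmeas, hBae] with x hxΩ hxB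
    obtain ⟨hinvΩ, hXXinv⟩ := hXinvΩ x hxΩ
    have hninv : Xinv t x ∉ N := fun hmem => hxB ⟨Xinv t x, ⟨hmem, hinvΩ⟩, hXXinv⟩
    have h0 : ω₀ (Xinv t x) = ω' (Xinv t x) := by
      by_contra h
      exact hninv (hNsub h)
    rw [h0, ← hvX _ hinvΩ, hXXinv]
  choose v hvmeas hvX hvae using hv
  -- change of variables by the measure-preserving flow map
  have key : ∀ (t : ℝ) (ψ : EuclideanSpace ℝ (Fin 2) → ℝ),
      AEStronglyMeasurable ψ (volume.restrict Ω) →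
      (∫ x in Ω, ω₀ (Xinv t x) * ψ x) = ∫ y in Ω, ω' y * ψ (X t y) := by
    intro t ψ hψ
    have h1 : (fun x => ω₀ (Xinv t x) * ψ x) =ᵐ[volume.restrict Ω]
        (fun x => v t x * ψ x) := (hvae t).mul EventuallyEq.rfl
    rw [integral_congr_ae h1]
    have hfm : AEStronglyMeasurable (fun x => v t x * ψ x)
        (Measure.map (X t) (volume.restrict Ω)) := by
      rw [(hXmp t).map_eq]
      exact (hvmeas t).aestronglyMeasurable.mul hψ
    have h2 := integral_map (μ := volume.restrict Ω) (measX t).aemeasurable hfm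
    rw [(hXmp t).map_eq] at h2
    rw [h2]
    refine integral_congr_ae ?_
    filter_upwards [ae_restrict_mem hΩmeas] with y hy
    rw [hvX t y hy]
  -- the Lagrangian time-derivative
  set G' : ℝ → EuclideanSpace ℝ (Fin 2) → ℝ :=
    fun t a => fderiv ℝ Φ (X t a, t) (u (X t a) t, 1) with hG'def
  have hφtcont : ∀ t : ℝ, Continuous fun z : EuclideanSpace ℝ (Fin 2) => φ z t :=
    fun t => hφ.continuous.comp (continuous_id.prodMk continuous_const)
  have hmeasφt : ∀ t : ℝ, AEStronglyMeasurable (fun a => ω' a * φ (X t a) t)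
      (volume.restrict Ω) := by
    intro t
    refine hω'meas.aestronglyMeasurable.mul ?_
    exact ((hφtcont t).measurable.comp (measX t)).aestronglyMeasurable
  have hmeasG' : ∀ t : ℝ, AEStronglyMeasurable (fun a => ω' a * G' t a)
      (volume.restrict Ω) := by
    intro t
    refine hω'meas.aestronglyMeasurable.mul ?_
    have h1 : Continuous fun p : EuclideanSpace ℝ (Fin 2) =>
        (fderiv ℝ Φ (p, t)) (u p t, 1) :=
      (hcfd.comp (continuous_id.prodMk continuous_const)).clm_apply
        ((hu_cont t).prodMk continuous_const)
    exact (h1.measurable.comp (measX t)).aestronglyMeasurable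
  have hchain : ∀ (a : EuclideanSpace ℝ (Fin 2)) (t : ℝ),
      HasDerivAt (fun s => φ (X s a) s) (G' t a) t := fun a t =>
    chain_aux Φ hφ (fun s => X s a) (u (X t a) t) t (hXode a t)
  -- differentiating under the integral sign
  have hG : ∀ t₀ : ℝ, HasDerivAt (fun t => ∫ a in Ω, ω' a * φ (X t a) t)
      (∫ a in Ω, ω' a * G' t₀ a) t₀ := by
    intro t₀
    obtain ⟨κ, hκ0, hκ⟩ := hbounds (closure Ω ×ˢ Icc (t₀ - 1) (t₀ + 1))
      (hclos.prod isCompact_Icc)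
    have hball : ∀ (t : ℝ) (a : EuclideanSpace ℝ (Fin 2)), a ∈ Ω → t ∈ ball t₀ 1 →
        ‖G' t a‖ ≤ κ * max A 1 := by
      intro t a ha htb
      rw [mem_ball, Real.dist_eq] at htb
      have h1 := abs_lt.mp htb
      have hp := hκ (X t a, t) ⟨subset_closure ((hXbij t).mapsTo ha),
        by constructor <;> linarith [h1.1, h1.2]⟩
      have h2 : ‖(u (X t a) t, (1:ℝ))‖ ≤ max A 1 := by
        rw [Prod.norm_def]
        simp only [norm_one]
        exact max_le_max (hu_bdd _ _) le_rfl
      calc ‖G' t a‖ ≤ ‖fderiv ℝ Φ (X t a, t)‖ * ‖(u (X t a) t, (1:ℝ))‖ :=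
            ContinuousLinearMap.le_opNorm _ _
        _ ≤ κ * max A 1 := mul_le_mul hp.1 h2 (norm_nonneg _) hκ0
    have hder := hasDerivAt_integral_of_dominated_loc_of_deriv_le
      (μ := volume.restrict Ω) (x₀ := t₀)
      (F := fun t a => ω' a * φ (X t a) t) (F' := fun t a => ω' a * G' t a)
      (bound := fun _ => C * (κ * max A 1)) (ball_mem_nhds t₀ zero_lt_one)
      (Eventually.of_forall fun t => hmeasφt t) ?hint (hmeasG' t₀) ?hbound
      (integrable_const _) ?hdiff
    · exact hder.2
    case hint =>
      refine Integrable.mono' (integrable_const (C * κ)) (hmeasφt t₀) ?_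
      filter_upwards [hC', ae_restrict_mem hΩmeas] with a hCa haΩ
      rw [norm_mul]
      have hp := hκ (X t₀ a, t₀) ⟨subset_closure ((hXbij t₀).mapsTo haΩ),
        by constructor <;> linarith⟩
      have h2 : ‖φ (X t₀ a) t₀‖ ≤ κ := by rw [Real.norm_eq_abs]; exact hp.2
      exact mul_le_mul hCa h2 (norm_nonneg _) hC0
    case hbound =>
      filter_upwards [hC', ae_restrict_mem hΩmeas] with a hCa haΩ
      intro t htb
      rw [norm_mul]
      exact mul_le_mul hCa (hball t a haΩ htb) (norm_nonneg _) hC0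
    case hdiff =>
      refine Eventually.of_forall fun a => fun t _ => ?_
      exact (hchain a t).const_mul (ω' a)
  -- interval integrability of the derivative
  have hFeq : (fun t => ∫ a in Ω, ω' a * G' t a)
      = deriv (fun t => ∫ a in Ω, ω' a * φ (X t a) t) :=
    funext fun t => ((hG t).deriv).symm
  have hFmeas : Measurable fun t => ∫ a in Ω, ω' a * G' t a := by
    rw [hFeq]; exact measurable_deriv _
  have hFint : IntervalIntegrable (fun t => ∫ a in Ω, ω' a * G' t a) volume t₁ t₂ := by
    obtain ⟨κ, hκ0, hκ⟩ := hbounds (closure Ω ×ˢ Icc t₁ t₂) (hclos.prod isCompact_Icc)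
    rw [intervalIntegrable_iff, uIoc_of_le ht]
    refine Integrable.mono'
      (g := fun _ => C * (κ * max A 1) * ((volume.restrict Ω) univ).toReal)
      (integrableOn_const measure_Ioc_lt_top.ne)
      hFmeas.aestronglyMeasurable.restrict ?_
    filter_upwards [ae_restrict_mem measurableSet_Ioc] with t htt
    refine norm_integral_le_of_norm_le_const ?_
    filter_upwards [hC', ae_restrict_mem hΩmeas] with a hCa haΩ
    rw [norm_mul]
    have hp := hκ (X t a, t) ⟨subset_closure ((hXbij t).mapsTo haΩ),
      Ioc_subset_Icc_self htt⟩
    have h2 : ‖(u (X t a) t, (1:ℝ))‖ ≤ max A 1 := by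
      rw [Prod.norm_def]
      simp only [norm_one]
      exact max_le_max (hu_bdd _ _) le_rfl
    have h3 : ‖G' t a‖ ≤ κ * max A 1 :=
      calc ‖G' t a‖ ≤ ‖fderiv ℝ Φ (X t a, t)‖ * ‖(u (X t a) t, (1:ℝ))‖ :=
            ContinuousLinearMap.le_opNorm _ _
        _ ≤ κ * max A 1 := mul_le_mul hp.1 h2 (norm_nonneg _) hκ0
    exact mul_le_mul hCa h3 (norm_nonneg _) hC0
  -- fundamental theorem of calculus
  have hFTC := intervalIntegral.integral_eq_sub_of_hasDerivAt
    (f := fun t => ∫ a in Ω, ω' a * φ (X t a) t)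
    (f' := fun t => ∫ a in Ω, ω' a * G' t a) (fun t _ => hG t) hFint
  -- identification of the inner integral
  have hψcont : ∀ t : ℝ, Continuous fun x : EuclideanSpace ℝ (Fin 2) =>
      deriv (φ x) t + (fderiv ℝ (fun y => φ y t) x) (u x t) := by
    intro t
    have h1 : (fun x : EuclideanSpace ℝ (Fin 2) =>
        deriv (φ x) t + (fderiv ℝ (fun y => φ y t) x) (u x t))
        = fun x => fderiv ℝ Φ (x, t) (u x t, 1) :=
      funext fun x => decomp_aux Φ hφ x t (u x t)
    rw [h1]
    exact (hcfd.comp (continuous_id.prodMk continuous_const)).clm_apply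
      ((hu_cont t).prodMk continuous_const)
  have hLHS : ∀ t : ℝ, (∫ x in Ω, ω₀ (Xinv t x) *
      (deriv (φ x) t + (fderiv ℝ (fun y => φ y t) x) (u x t)))
      = ∫ a in Ω, ω' a * G' t a := by
    intro t
    rw [key t _ (hψcont t).aestronglyMeasurable]
    refine integral_congr_ae (Eventually.of_forall fun a => ?_)
    exact congrArg (fun z => ω' a * z) (decomp_aux Φ hφ (X t a) t (u (X t a) t))
  -- integrability of the boundary terms
  have hIntφ : ∀ t : ℝ, Integrable (fun x => ω₀ (Xinv t x) * φ x t)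
      (volume.restrict Ω) := by
    intro t
    obtain ⟨κ, hκ0, hκ⟩ := hbounds (closure Ω ×ˢ Icc (t - 1) (t + 1))
      (hclos.prod isCompact_Icc)
    have h1 : (fun x => ω₀ (Xinv t x) * φ x t) =ᵐ[volume.restrict Ω]
        (fun x => v t x * φ x t) := (hvae t).mul EventuallyEq.rfl
    rw [integrable_congr h1]
    have hfm : AEStronglyMeasurable (fun x => v t x * φ x t)
        (Measure.map (X t) (volume.restrict Ω)) := by
      rw [(hXmp t).map_eq]
      exact (hvmeas t).aestronglyMeasurable.mul (hφtcont t).aestronglyMeasurable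
    rw [← (hXmp t).map_eq, integrable_map_measure hfm (measX t).aemeasurable]
    refine Integrable.congr (f := fun a => ω' a * φ (X t a) t) ?_ ?_
    · refine Integrable.mono' (integrable_const (C * κ)) (hmeasφt t) ?_
      filter_upwards [hC', ae_restrict_mem hΩmeas] with a hCa haΩ
      rw [norm_mul]
      have hp := hκ (X t a, t) ⟨subset_closure ((hXbij t).mapsTo haΩ),
        by constructor <;> linarith⟩
      have h2 : ‖φ (X t a) t‖ ≤ κ := by rw [Real.norm_eq_abs]; exact hp.2
      exact mul_le_mul hCa h2 (norm_nonneg _) hC0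
    · filter_upwards [ae_restrict_mem hΩmeas] with a haΩ
      show ω' a * φ (X t a) t = v t (X t a) * φ (X t a) t
      rw [hvX t a haΩ]
  have hRHS_t : ∀ t : ℝ, (∫ x in Ω, ω₀ (Xinv t x) * φ x t)
      = ∫ a in Ω, ω' a * φ (X t a) t := fun t =>
    key t (fun x => φ x t) (hφtcont t).aestronglyMeasurable
  calc (∫ t in t₁..t₂, ∫ x in Ω, ω₀ (Xinv t x) *
        (deriv (φ x) t + (fderiv ℝ (fun y => φ y t) x) (u x t)))
      = ∫ t in t₁..t₂, ∫ a in Ω, ω' a * G' t a :=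
        intervalIntegral.integral_congr fun t _ => hLHS t
    _ = (∫ a in Ω, ω' a * φ (X t₂ a) t₂) - ∫ a in Ω, ω' a * φ (X t₁ a) t₁ := hFTC
    _ = (∫ x in Ω, ω₀ (Xinv t₂ x) * φ x t₂) - ∫ x in Ω, ω₀ (Xinv t₁ x) * φ x t₁ := by
        rw [hRHS_t t₂, hRHS_t t₁]
    _ = ∫ x in Ω, (ω₀ (Xinv t₂ x) * φ x t₂ - ω₀ (Xinv t₁ x) * φ x t₁) :=
        (integral_sub (hIntφ t₂) (hIntφ t₁)).symm
end
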